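/- arXiv:1912.12001 — 9 statements merged into one kernel-verified Lean document; each statement's English description precedes it below -/
import Mathlib

section
/- Let α, τ, η, β be real numbers with α ∈ (0,2), α ≠ 1, τ > 0, η > 0, β > 0, and suppose Condition 1 holds: τ < α and β ≥ max( (α−1)/(τ − τ^α·(τ + log(1+η))^(1−α)), α/τ + 1/η ). Then f(x) ≤ f(1) for all real x ≥ 1. -/
open Real Filter

/-- The function `f` from the paper (Eq. (33)):
`f(x) = x·(τ + log(1 + η/((x−1)ηβ + 1)))^(1−α)/(1−α) − (x−1)·τ^(1−α)/(1−α)`. -/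
noncomputable def f (α τ η β : ℝ) : ℝ → ℝ := fun x =>
  x * (τ + Real.log (1 + η / ((x - 1) * η * β + 1))) ^ (1 - α) / (1 - α)
    - (x - 1) * τ ^ (1 - α) / (1 - α)

noncomputable def f1 (α τ η β : ℝ) : ℝ → ℝ := fun x =>
  ((τ + Real.log (1 + η / ((x - 1) * η * β + 1))) ^ (1 - α) - τ ^ (1 - α)) / (1 - α)
    - x * (τ + Real.log (1 + η / ((x - 1) * η * β + 1))) ^ (-α)
      * (η^2*β / (((x - 1) * η * β + 1) * (((x - 1) * η * β + 1) + η)))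

noncomputable def f2 (α τ η β : ℝ) : ℝ → ℝ := fun x =>
  (τ + Real.log (1 + η / ((x - 1) * η * β + 1))) ^ (-α)
    * (η^2*β / (((x - 1) * η * β + 1) * (((x - 1) * η * β + 1) + η)))
    * ( x*(η*β)*(2*((x - 1) * η * β + 1)+η) / (((x - 1) * η * β + 1) * (((x - 1) * η * β + 1) + η))
        - 2
        - x*α*(η^2*β) / (((x - 1) * η * β + 1) * (((x - 1) * η * β + 1) + η)
            * (τ + Real.log (1 + η / ((x - 1) * η * β + 1)))) )

lemma pade_log {z : ℝ} (hz : 0 ≤ z) : 2*z/(2+z) ≤ Real.log (1+z) := by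
  set F : ℝ → ℝ := fun z => Real.log (1+z) - 2*z/(2+z) with hF
  have hderiv : ∀ w ∈ Set.Ici (0:ℝ), HasDerivAt F (w^2 / ((1+w)*(2+w)^2)) w := by
    intro w hw
    have hw0 : (0:ℝ) ≤ w := hw
    have h1 : (1:ℝ) + w ≠ 0 := by positivity
    have h2 : (2:ℝ) + w ≠ 0 := by positivity
    have hlog : HasDerivAt (fun z : ℝ => Real.log (1+z)) (1/(1+w)) w := by
      have := ((hasDerivAt_id w).const_add 1).log h1
      simpa using this
    have hrat : HasDerivAt (fun z : ℝ => 2*z/(2+z)) (4/(2+w)^2) w := by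
      have := (((hasDerivAt_id w).const_mul 2).div ((hasDerivAt_id w).const_add 2) h2)
      refine this.congr_deriv ?_
      simp only [id_eq]
      field_simp
      ring
    refine (hlog.sub hrat).congr_deriv ?_
    field_simp
    ring
  have hmono : MonotoneOn F (Set.Ici 0) := by
    apply monotoneOn_of_hasDerivWithinAt_nonneg (convex_Ici 0)
      (fun w hw => ((hderiv w hw).continuousAt).continuousWithinAt)
      (fun w hw => ((hderiv w (interior_subset hw)).hasDerivWithinAt))
    intro w hw
    rw [interior_Ici] at hw
    have : (0:ℝ) < w := hw
    positivity
  have h0 : F 0 ≤ F z := hmono (by simp) hz hz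
  simp only [hF] at h0
  norm_num at h0
  linarith

-- Bernoulli for nonpositive exponent
lemma bernoulli_nonpos {s p : ℝ} (hs : 0 ≤ s) (hp : p ≤ 0) (hp1 : -1 ≤ p) :
    1 + p * s ≤ (1 + s) ^ p := by
  have h1s : (0:ℝ) < 1 + s := by linarith
  have hq : (1+s)^(-p) ≤ 1 + (-p)*s :=
    rpow_one_add_le_one_add_mul_self (by linarith) (by linarith) (by linarith)
  have hpos : (0:ℝ) < (1+s)^p := Real.rpow_pos_of_pos h1s p
  have hinv : (1+s)^p = ((1+s)^(-p))⁻¹ := by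
    rw [← Real.rpow_neg h1s.le, neg_neg]
  rcases le_or_gt (1 + p*s) 0 with h | h
  · linarith
  · rw [hinv, le_inv_comm₀ h (Real.rpow_pos_of_pos h1s (-p))]
    calc (1+s)^(-p) ≤ 1 + (-p)*s := hq
    _ ≤ (1 + p*s)⁻¹ := by
        rw [inv_eq_one_div, le_div_iff₀ h]
        nlinarith [sq_nonneg (p*s)]

lemma lemA {α τ η m u : ℝ} (hτ : 0 < τ) (hη : 0 < η) (hα0 : 0 < α) (hα2 : α ≤ 2)
    (h1 : α*η ≤ τ*m) (h2 : η ≤ m) (hu : 1 ≤ u) :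
    α*η*(u+m) ≤ (τ + Real.log (1+η/u)) * (u*(2*m-η)+m*η) := by
  have hu0 : 0 < u := by linarith
  have hz : 0 ≤ η/u := by positivity
  have hlog2 : 2*η/(2*u+η) ≤ Real.log (1+η/u) := by
    calc 2*η/(2*u+η) = 2*(η/u)/(2+η/u) := by
          rw [div_eq_div_iff (by positivity) (by positivity)]
          field_simp
        _ ≤ _ := pade_log hz
  have hpos : (0:ℝ) ≤ u*(2*m-η)+m*η := by nlinarith
  have step : (τ + 2*η/(2*u+η)) * (u*(2*m-η)+m*η) ≤ (τ + Real.log (1+η/u)) * (u*(2*m-η)+m*η) :=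
    mul_le_mul_of_nonneg_right (by linarith) hpos
  refine le_trans ?_ step
  rw [← sub_nonneg]
  have h2u : (0:ℝ) < 2*u+η := by positivity
  have key : ((τ + 2*η/(2*u+η)) * (u*(2*m-η)+m*η) - α*η*(u+m)) * (2*u+η)
      = τ*(2*u+η)*(u*(2*m-η)+m*η) + 2*η*(u*(2*m-η)+m*η) - α*η*(u+m)*(2*u+η) := by
    field_simp
  have hE : 0 ≤ τ*(2*u+η)*(u*(2*m-η)+m*η) + 2*η*(u*(2*m-η)+m*η) - α*η*(u+m)*(2*u+η) := by
    nlinarith [mul_nonneg (mul_nonneg (sub_nonneg.2 h1) hu0.le) hu0.le,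
      mul_nonneg (mul_nonneg (mul_nonneg (sub_nonneg.2 h2) hτ.le) hu0.le) hu0.le,
      mul_nonneg (mul_nonneg (mul_nonneg (sub_nonneg.2 h2) hτ.le) hu0.le) hη.le,
      mul_nonneg (mul_nonneg (sub_nonneg.2 h1) hu0.le) hη.le,
      mul_nonneg (mul_nonneg (mul_nonneg (sub_nonneg.2 hα2) (sub_nonneg.2 h2)) hu0.le) hη.le,
      mul_nonneg (mul_nonneg hτ.le (hη.le.trans h2)) (mul_nonneg hη.le hη.le),
      mul_nonneg (mul_nonneg (sub_nonneg.2 hα2) (hη.le.trans h2)) (mul_nonneg hη.le hη.le),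
      mul_nonneg (mul_nonneg hη.le hu0.le) hη.le]
  have := (mul_nonneg_iff_of_pos_right h2u).mp (key ▸ hE)
  exact this

lemma hasDerivAt_U {η β : ℝ} (x : ℝ) :
    HasDerivAt (fun x : ℝ => (x - 1) * η * β + 1) (η*β) x := by
  simpa using ((((hasDerivAt_id x).sub_const 1).mul_const η).mul_const β).add_const 1

lemma hasDerivAt_g {α τ η β : ℝ} (hη : 0 < η) {x : ℝ} (hU : 0 < (x - 1) * η * β + 1) :
    HasDerivAt (fun x : ℝ => τ + Real.log (1 + η / ((x - 1) * η * β + 1)))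
      (-(η^2*β) / (((x - 1) * η * β + 1) * (((x - 1) * η * β + 1) + η))) x := by
  have hq : HasDerivAt (fun x : ℝ => η / ((x - 1) * η * β + 1))
      ((0 * ((x - 1) * η * β + 1) - η * (η*β)) / ((x - 1) * η * β + 1)^2) x :=
    (hasDerivAt_const x η).div (hasDerivAt_U x) hU.ne'
  have harg : (0:ℝ) < 1 + η / ((x - 1) * η * β + 1) := by
    have := div_pos hη hU; linarith
  have hd := ((hq.const_add 1).log harg.ne').const_add τ
  refine hd.congr_deriv (Eq.symm ?_)
  have halg : ∀ U : ℝ, 0 < U → 0 < U + η → 0 < 1 + η/U →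
      -(η^2*β) / (U * (U + η)) = (0 * U - η * (η*β)) / U^2 / (1 + η/U) := by
    intro U h1 h2 h3
    rw [div_div, div_eq_div_iff (by positivity) (by positivity)]
    field_simp
    ring
  exact halg _ hU (by positivity) harg

lemma log_arg_pos {η β : ℝ} (hη : 0 < η) {x : ℝ} (hU : 0 < (x - 1) * η * β + 1) :
    0 < Real.log (1 + η / ((x - 1) * η * β + 1)) := by
  apply Real.log_pos
  have := div_pos hη hU; linarith

lemma hasDerivAt_f {α τ η β : ℝ} (hτ : 0 < τ) (hη : 0 < η) (hα1 : α ≠ 1)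
    {x : ℝ} (hU : 0 < (x - 1) * η * β + 1) :
    HasDerivAt (f α τ η β) (f1 α τ η β x) x := by
  have hc : (1:ℝ) - α ≠ 0 := sub_ne_zero.2 (Ne.symm hα1)
  have hg : (0:ℝ) < τ + Real.log (1 + η / ((x - 1) * η * β + 1)) := by
    have := log_arg_pos hη hU; linarith
  have hgd := hasDerivAt_g (α := α) (τ := τ) hη hU
  have hrpow := hgd.rpow_const (p := 1 - α) (Or.inl hg.ne')
  have hmain := (((hasDerivAt_id x).mul hrpow).div_const (1 - α)).sub
    ((((hasDerivAt_id x).sub_const 1).mul_const (τ ^ (1-α))).div_const (1 - α))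
  refine hmain.congr_deriv (Eq.symm ?_)
  simp only [f1, id_eq]
  rw [show (1 - α - 1 : ℝ) = -α by ring]
  have hUne : ((x - 1) * η * β + 1) ≠ 0 := hU.ne'
  have hUη : ((x - 1) * η * β + 1) + η ≠ 0 := by positivity
  have hQ : (τ + Real.log (1 + η / ((x - 1) * η * β + 1))) ^ (-α) ≠ 0 :=
    (Real.rpow_pos_of_pos hg _).ne'
  field_simp
  ring

lemma hasDerivAt_f1 {α τ η β : ℝ} (hτ : 0 < τ) (hη : 0 < η) (hα1 : α ≠ 1)
    {x : ℝ} (hU : 0 < (x - 1) * η * β + 1) :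
    HasDerivAt (f1 α τ η β) (f2 α τ η β x) x := by
  have hc : (1:ℝ) - α ≠ 0 := sub_ne_zero.2 (Ne.symm hα1)
  have hg : (0:ℝ) < τ + Real.log (1 + η / ((x - 1) * η * β + 1)) := by
    have := log_arg_pos hη hU; linarith
  have hgd := hasDerivAt_g (α := α) (τ := τ) hη hU
  have hUU : ((x - 1) * η * β + 1) * (((x - 1) * η * β + 1) + η) ≠ 0 := by positivity
  have hD : HasDerivAt (fun x : ℝ => η^2*β / (((x - 1) * η * β + 1) * (((x - 1) * η * β + 1) + η)))
      ((0 * (((x - 1) * η * β + 1) * (((x - 1) * η * β + 1) + η))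
        - η^2*β * (η*β*(((x - 1) * η * β + 1) + η) + ((x - 1) * η * β + 1)*(η*β)))
        / (((x - 1) * η * β + 1) * (((x - 1) * η * β + 1) + η))^2) x :=
    (hasDerivAt_const x (η^2*β)).div ((hasDerivAt_U x).mul ((hasDerivAt_U x).add_const η)) hUU
  have hterm1 := ((hgd.rpow_const (p := 1 - α) (Or.inl hg.ne')).sub_const (τ^(1-α))).div_const (1-α)
  have hterm2 := ((hasDerivAt_id x).mul (hgd.rpow_const (p := -α) (Or.inl hg.ne'))).mul hD
  have hmain := hterm1.sub hterm2
  refine hmain.congr_deriv (Eq.symm ?_)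
  simp only [f2, id_eq, Pi.mul_apply]
  rw [show (1 - α - 1 : ℝ) = -α by ring, Real.rpow_sub_one hg.ne' (-α)]
  have hUne : ((x - 1) * η * β + 1) ≠ 0 := hU.ne'
  have hUη : ((x - 1) * η * β + 1) + η ≠ 0 := by positivity
  have hQ : (τ + Real.log (1 + η / ((x - 1) * η * β + 1))) ^ (-α) ≠ 0 :=
    (Real.rpow_pos_of_pos hg _).ne'
  generalize (τ + Real.log (1 + η / ((x - 1) * η * β + 1))) ^ (-α) = P at hQ ⊢
  generalize (τ + Real.log (1 + η / ((x - 1) * η * β + 1))) = G at hg ⊢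
  have hG := hg.ne'
  generalize (x - 1) * η * β + 1 = U at hUne hUη ⊢
  field_simp
  ring

lemma f2_nonneg {α τ η β : ℝ} (hτ : 0 < τ) (hη : 0 < η) (hβ : 0 < β)
    (hα0 : 0 < α) (hα2 : α ≤ 2) (hcond1 : τ < α) (hβ2 : α/τ + 1/η ≤ β)
    {x : ℝ} (hx : 1 ≤ x) : 0 ≤ f2 α τ η β x := by
  have hprod : (0:ℝ) ≤ (x - 1) * η * β := mul_nonneg (mul_nonneg (by linarith) hη.le) hβ.le
  have hU : (0:ℝ) < (x - 1) * η * β + 1 := by linarith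
  have hu1 : (1:ℝ) ≤ (x - 1) * η * β + 1 := by linarith
  have hg : (0:ℝ) < τ + Real.log (1 + η / ((x - 1) * η * β + 1)) := by
    have := log_arg_pos hη hU; linarith
  have hm1 : α*η ≤ τ*(η*β - 1) := by
    have h := mul_le_mul_of_nonneg_left hβ2 (le_of_lt (mul_pos hτ hη))
    have he : τ*η*(α/τ + 1/η) = α*η + τ := by field_simp
    nlinarith
  have hm2 : η ≤ η*β - 1 := by
    have : τ*η ≤ τ*(η*β -1) := by
      calc τ*η ≤ α*η := by nlinarith
      _ ≤ _ := hm1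
    nlinarith
  have hkey := lemA (m := η*β - 1) (u := (x - 1) * η * β + 1) hτ hη hα0 hα2 hm1 hm2 hu1
  set U := (x - 1) * η * β + 1 with hUdef
  set g := τ + Real.log (1 + η / U) with hgdef
  have hUη : (0:ℝ) < U + η := by positivity
  refine mul_nonneg (mul_nonneg ?_ ?_) ?_
  · exact (Real.rpow_pos_of_pos hg _).le
  · positivity
  · have hW : (0:ℝ) < U * (U + η) * g := by positivity
    have hx1 : x*(η*β) = U + (η*β - 1) := by rw [hUdef]; ring
    have hx2 : x*α*(η^2*β) = α*η*(U + (η*β-1)) := by rw [hUdef]; ring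
    rw [hx1, hx2]
    have hident : ((U + (η*β - 1))*(2*U+η) / (U * (U + η)) - 2
          - α*η*(U + (η*β-1)) / (U * (U + η) * g)) * (U * (U + η) * g)
        = g * (U*(2*(η*β-1)-η)+(η*β-1)*η) - α*η*(U+(η*β-1)) := by
      field_simp
      ring
    have h0 : 0 ≤ ((U + (η*β - 1))*(2*U+η) / (U * (U + η)) - 2
          - α*η*(U + (η*β-1)) / (U * (U + η) * g)) * (U * (U + η) * g) := by
      rw [hident]; linarith
    exact (mul_nonneg_iff_of_pos_right hW).mp h0

lemma tangent_est {τ g α : ℝ} (hτ : 0 < τ) (hg : τ ≤ g) (hα0 : 0 < α) (hα2 : α < 2)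
    (hα1 : α ≠ 1) : (g ^ (1-α) - τ ^ (1-α))/(1-α) ≤ (g - τ) * τ ^ (-α) := by
  have hg0 : 0 < g := lt_of_lt_of_le hτ hg
  set s := g/τ - 1 with hsdef
  have hs : 0 ≤ s := by
    rw [hsdef, sub_nonneg, le_div_iff₀ hτ, one_mul]; exact hg
  have hgs : g = τ*(1+s) := by rw [hsdef]; field_simp; ring
  have hpow : g^(1-α) = τ^(1-α)*(1+s)^(1-α) := by
    rw [hgs, Real.mul_rpow hτ.le (by linarith)]
  have hcs : ((1+s)^(1-α) - 1)/(1-α) ≤ s := by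
    rcases lt_or_gt_of_ne hα1 with h | h
    · -- α < 1, c > 0, Bernoulli upper
      have hb : (1+s)^(1-α) ≤ 1 + (1-α)*s :=
        rpow_one_add_le_one_add_mul_self (by linarith) (by linarith) (by linarith)
      rw [div_le_iff₀ (by linarith)]
      nlinarith
    · -- α > 1, c < 0
      have hb : 1 + (1-α)*s ≤ (1+s)^(1-α) :=
        bernoulli_nonpos hs (by linarith) (by linarith)
      rw [div_le_iff_of_neg (by linarith)]
      nlinarith
  have hτc : (0:ℝ) < τ^(1-α) := Real.rpow_pos_of_pos hτ _
  have hchain : (g^(1-α) - τ^(1-α))/(1-α) = τ^(1-α) * (((1+s)^(1-α) - 1)/(1-α)) := by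
    rw [hpow]; ring
  have hrhs : (g - τ) * τ^(-α) = τ^(1-α) * s := by
    have h1 : g - τ = τ * s := by rw [hgs]; ring
    have h2 : τ^(1-α) = τ * τ^(-α) := by
      rw [show (1-α:ℝ) = 1 + (-α) by ring, Real.rpow_add hτ, Real.rpow_one]
    rw [h1, h2]; ring
  rw [hchain, hrhs]
  exact mul_le_mul_of_nonneg_left hcs hτc.le

lemma f_le_C {α τ η β : ℝ} (hτ : 0 < τ) (hη : 0 < η) (hβ : 0 < β)
    (hα0 : 0 < α) (hα2 : α < 2) (hα1 : α ≠ 1) {X : ℝ} (hX : 2 ≤ X) :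
    f α τ η β X ≤ τ^(1-α)/(1-α) + 2*τ^(-α)/β := by
  have hprod : (0:ℝ) ≤ (X - 1) * η * β := by
    apply mul_nonneg (mul_nonneg (by linarith) hη.le) hβ.le
  have hU : (0:ℝ) < (X - 1) * η * β + 1 := by linarith
  set U := (X - 1) * η * β + 1 with hUdef
  have harg : (0:ℝ) < 1 + η / U := by have := div_pos hη hU; linarith
  have hlogpos : 0 < Real.log (1 + η/U) := Real.log_pos (by have := div_pos hη hU; linarith)
  set g := τ + Real.log (1 + η / U) with hgdef
  have hgτ : τ ≤ g := by rw [hgdef]; linarith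
  have hten := tangent_est hτ hgτ hα0 hα2 hα1
  have hlog_le : g - τ ≤ η/U := by
    rw [hgdef]
    have := Real.log_le_sub_one_of_pos harg
    simpa using this
  have hXη : X * (η/U) ≤ 2/β := by
    rw [mul_div_assoc' X η U, div_le_div_iff₀ hU hβ]
    nlinarith [mul_nonneg (mul_nonneg (by linarith : (0:ℝ) ≤ X - 2) hη.le) hβ.le]
  have hτα : (0:ℝ) < τ^(-α) := Real.rpow_pos_of_pos hτ _
  have hX0 : (0:ℝ) < X := by linarith
  have hkey : X * ((g^(1-α) - τ^(1-α))/(1-α)) ≤ 2*τ^(-α)/β := by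
    calc X * ((g^(1-α) - τ^(1-α))/(1-α)) ≤ X * ((g - τ) * τ^(-α)) := by
          exact mul_le_mul_of_nonneg_left hten hX0.le
      _ ≤ X * ((η/U) * τ^(-α)) := by
          apply mul_le_mul_of_nonneg_left _ hX0.le
          exact mul_le_mul_of_nonneg_right hlog_le hτα.le
      _ = (X * (η/U)) * τ^(-α) := by ring
      _ ≤ (2/β) * τ^(-α) := mul_le_mul_of_nonneg_right hXη hτα.le
      _ = 2*τ^(-α)/β := by ring
  have hfX : f α τ η β X = X * ((g^(1-α) - τ^(1-α))/(1-α)) + τ^(1-α)/(1-α) := by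
    simp only [f, ← hUdef, ← hgdef]
    ring
  rw [hfX]
  linarith

/-- under Condition 1 (τ < α and the lower bound on β),
for α ∈ (0,2), α ≠ 1, we have f(x) ≤ f(1) for all x ≥ 1. -/
theorem stmt_0 (α τ η β : ℝ) (hα0 : 0 < α) (hα2 : α < 2) (hα1 : α ≠ 1)
    (hτ : 0 < τ) (hη : 0 < η) (hβ : 0 < β)
    (hcond1 : τ < α)
    (hcond2 : β ≥ max ((α - 1) / (τ - τ ^ α * (τ + Real.log (1 + η)) ^ (1 - α)))
      (α / τ + 1 / η)) :
    ∀ x : ℝ, 1 ≤ x → f α τ η β x ≤ f α τ η β 1 := by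
  have hβ2 : α/τ + 1/η ≤ β := le_trans (le_max_right _ _) hcond2
  have hUpos : ∀ {x : ℝ}, 1 ≤ x → (0:ℝ) < (x - 1) * η * β + 1 := by
    intro x hx
    have : (0:ℝ) ≤ (x - 1) * η * β := mul_nonneg (mul_nonneg (by linarith) hη.le) hβ.le
    linarith
  -- convexity of f on [1, ∞)
  have hconv : ConvexOn ℝ (Set.Ici 1) (f α τ η β) := by
    apply convexOn_of_hasDerivWithinAt2_nonneg (f' := f1 α τ η β) (f'' := f2 α τ η β)
      (convex_Ici 1)
    · intro x hx
      exact (hasDerivAt_f hτ hη hα1 (hUpos hx)).continuousAt.continuousWithinAt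
    · intro x hx
      rw [interior_Ici] at hx
      exact (hasDerivAt_f hτ hη hα1 (hUpos (le_of_lt hx))).hasDerivWithinAt
    · intro x hx
      rw [interior_Ici] at hx
      exact (hasDerivAt_f1 hτ hη hα1 (hUpos (le_of_lt hx))).hasDerivWithinAt
    · intro x hx
      rw [interior_Ici] at hx
      exact f2_nonneg hτ hη hβ hα0 hα2.le hcond1 hβ2 (le_of_lt hx)
  intro x hx
  rcases eq_or_lt_of_le hx with rfl | hx1
  · exact le_refl _
  obtain ⟨C, hfC⟩ : ∃ C : ℝ, ∀ X : ℝ, 2 ≤ X → f α τ η β X ≤ C :=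
    ⟨τ^(1-α)/(1-α) + 2*τ^(-α)/β, fun X hX => f_le_C hτ hη hβ hα0 hα2 hα1 hX⟩
  -- chord bound
  have key : ∀ X : ℝ, max x 2 ≤ X →
      f α τ η β x ≤ f α τ η β 1 + ((1-x) * f α τ η β 1 + (x-1) * C) * (X-1)⁻¹ := by
    intro X hXm
    have hXx : x ≤ X := le_trans (le_max_left _ _) hXm
    have hX2 : (2:ℝ) ≤ X := le_trans (le_max_right _ _) hXm
    have hX1 : (1:ℝ) < X := by linarith
    have hX1' : X - 1 ≠ 0 := by linarith
    have ha : (0:ℝ) ≤ (X-x)/(X-1) := div_nonneg (by linarith) (by linarith)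
    have hb : (0:ℝ) ≤ (x-1)/(X-1) := div_nonneg (by linarith) (by linarith)
    have hab : (X-x)/(X-1) + (x-1)/(X-1) = 1 := by
      rw [← add_div, show X - x + (x-1) = X - 1 by ring, div_self hX1']
    have hcomb := hconv.2 (Set.self_mem_Ici) (Set.mem_Ici.mpr hX1.le) ha hb hab
    have hxeq : ((X-x)/(X-1)) • (1:ℝ) + ((x-1)/(X-1)) • X = x := by
      simp only [smul_eq_mul, mul_one]
      rw [div_mul_eq_mul_div, ← add_div, div_eq_iff hX1']
      ring
    rw [hxeq] at hcomb
    simp only [smul_eq_mul] at hcomb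
    have hfX : f α τ η β X ≤ C := hfC X hX2
    have hstep : (x-1)/(X-1) * f α τ η β X ≤ (x-1)/(X-1) * C :=
      mul_le_mul_of_nonneg_left hfX hb
    have halg : ∀ F1 : ℝ, (X-x)/(X-1) * F1 + (x-1)/(X-1) * C
        = F1 + ((1-x) * F1 + (x-1) * C) * (X-1)⁻¹ := by
      intro F1
      rw [inv_eq_one_div, mul_one_div, div_mul_eq_mul_div, div_mul_eq_mul_div,
        ← add_div, div_eq_iff hX1', add_mul, div_mul_cancel₀ _ hX1']
      ring
    calc f α τ η β x ≤ (X-x)/(X-1) * f α τ η β 1 + (x-1)/(X-1) * f α τ η β X := hcomb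
      _ ≤ (X-x)/(X-1) * f α τ η β 1 + (x-1)/(X-1) * C := by linarith
      _ = f α τ η β 1 + ((1-x) * f α τ η β 1 + (x-1) * C) * (X-1)⁻¹ := halg _
  -- take limit X → ∞
  have htend : Tendsto (fun X : ℝ => f α τ η β 1 + ((1-x) * f α τ η β 1 + (x-1) * C) * (X-1)⁻¹)
      atTop (nhds (f α τ η β 1)) := by
    have h1 : Tendsto (fun X : ℝ => (X-1)⁻¹) atTop (nhds 0) :=
      (tendsto_atTop_add_const_right atTop (-1) tendsto_id).inv_tendsto_atTop
    have h2 := h1.const_mul ((1-x) * f α τ η β 1 + (x-1) * C)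
    rw [mul_zero] at h2
    have h3 := h2.const_add (f α τ η β 1)
    rw [add_zero] at h3
    exact h3
  exact ge_of_tendsto htend (eventually_atTop.2 ⟨max x 2, key⟩)
end

section
/- Let α, τ, η, β be real numbers with α ≥ 2, τ > 0, η > 0, β > 0, and suppose Condition 2 holds: α·(2^(α−1) − 1)/(τ·(α−1)) > 1, log(1+η) ≤ τ, and β ≥ max( (α−1)/(τ − τ^α·(τ + log(1+η))^(1−α)), α·(2^(α−1) − 1)/(τ·(α−1)) + 1/η ). Then f(x) ≤ f(1) for all real x ≥ 1. -/
open Real Filter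

open Set
lemma chord_rpow {p : ℝ} (hp : 1 ≤ p) {u : ℝ} (hu0 : 0 ≤ u) (hu1 : u ≤ 1) :
    (1 + u) ^ p ≤ 1 + (2 ^ p - 1) * u := by
  have hcv := convexOn_rpow hp
  have h := hcv.2 (mem_Ici.2 (by norm_num : (0:ℝ) ≤ 1))
      (mem_Ici.2 (by norm_num : (0:ℝ) ≤ 2)) (by linarith : (0:ℝ) ≤ 1 - u) hu0 (by ring)
  simp only [smul_eq_mul] at h
  rw [show ((1 - u) * 1 + u * 2 : ℝ) = 1 + u by ring, Real.one_rpow] at h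
  calc (1 + u) ^ p ≤ (1 - u) * 1 + u * 2 ^ p := h
    _ = 1 + (2 ^ p - 1) * u := by ring

lemma quad_bound {α : ℝ} (hα : 2 ≤ α) {u : ℝ} (hu0 : 0 ≤ u) (hu1 : u ≤ 1) :
    (1 + u) ^ α ≤ 1 + α * u + α * (2 ^ (α - 1) - 1) / 2 * u ^ 2 := by
  set Q : ℝ := 2 ^ (α - 1) - 1 with hQdef
  clear_value Q
  set g : ℝ → ℝ := fun t => 1 + α * t + α * Q / 2 * t ^ 2 - (1 + t) ^ α with hg
  have hd : ∀ t ∈ Icc (0:ℝ) 1,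
      HasDerivAt g (α + α * Q / 2 * (2 * t) - 1 * α * (1 + t) ^ (α - 1)) t := by
    intro t ht
    have h1t : (0:ℝ) < 1 + t := by linarith [ht.1]
    have h1 : HasDerivAt (fun t : ℝ => (1 + t) ^ α) (1 * α * (1 + t) ^ (α - 1)) t :=
      (HasDerivAt.const_add 1 (hasDerivAt_id t)).rpow_const (Or.inl h1t.ne')
    have h2 : HasDerivAt (fun t : ℝ => 1 + α * t + α * Q / 2 * t ^ 2)
        (α + α * Q / 2 * (2 * t)) t := by
      have ha : HasDerivAt (fun t : ℝ => 1 + α * t) α t := by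
        simpa using ((hasDerivAt_id t).const_mul α).const_add 1
      have hb : HasDerivAt (fun t : ℝ => α * Q / 2 * t ^ 2) (α * Q / 2 * (2 * t)) t := by
        simpa using (hasDerivAt_pow 2 t).const_mul (α * Q / 2)
      exact ha.add hb
    exact h2.sub h1
  have hmono : MonotoneOn g (Icc 0 1) := by
    apply monotoneOn_of_deriv_nonneg (convex_Icc 0 1)
    · intro t ht
      exact (hd t ht).continuousAt.continuousWithinAt
    · rw [interior_Icc]
      intro t ht
      exact (hd t (Ioo_subset_Icc_self ht)).differentiableAt.differentiableWithinAt
    · rw [interior_Icc]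
      intro t ht
      rw [(hd t (Ioo_subset_Icc_self ht)).deriv]
      have hch : (1 + t) ^ (α - 1) ≤ 1 + Q * t := by
        have h6 := chord_rpow (p := α - 1) (by linarith) ht.1.le ht.2.le
        rw [hQdef]
        exact h6
      have hαpos : (0:ℝ) < α := by linarith
      have h5 : α * ((1 + t) ^ (α - 1)) ≤ α * (1 + Q * t) :=
        mul_le_mul_of_nonneg_left hch hαpos.le
      nlinarith [h5]
  have h0 : g 0 = 0 := by simp [hg]
  have hu : g 0 ≤ g u := hmono (by constructor <;> norm_num) ⟨hu0, hu1⟩ hu0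
  rw [h0] at hu
  simp only [hg] at hu
  linarith

lemma log_le_div_sqrt {v : ℝ} (hv : 0 ≤ v) :
    Real.log (1 + v) ≤ v / Real.sqrt (1 + v) := by
  set h : ℝ → ℝ := fun w => w - 1 / w - 2 * Real.log w with hh
  have hd : ∀ w : ℝ, 0 < w →
      HasDerivAt h (1 - (0 * w - 1 * 1) / w ^ 2 - 2 * w⁻¹) w := by
    intro w hw
    have h1 : HasDerivAt (fun w : ℝ => 1 / w) ((0 * w - 1 * 1) / w ^ 2) w :=
      (hasDerivAt_const w 1).div (hasDerivAt_id w) hw.ne'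
    have h2 : HasDerivAt (fun w : ℝ => 2 * Real.log w) (2 * w⁻¹) w := by
      simpa [mul_comm] using (Real.hasDerivAt_log hw.ne').const_mul 2
    exact ((hasDerivAt_id w).sub h1).sub h2
  have hmono : MonotoneOn h (Ici 1) := by
    apply monotoneOn_of_deriv_nonneg (convex_Ici 1)
    · intro w hw
      exact (hd w (by linarith [mem_Ici.1 hw])).continuousAt.continuousWithinAt
    · rw [interior_Ici]
      intro w hw
      exact (hd w (by linarith [mem_Ioi.1 hw])).differentiableAt.differentiableWithinAt
    · rw [interior_Ici]
      intro w hw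
      have hw1 : (1:ℝ) < w := mem_Ioi.1 hw
      have hwpos : (0:ℝ) < w := by linarith
      rw [(hd w hwpos).deriv]
      have : 1 - (0 * w - 1 * 1) / w ^ 2 - 2 * w⁻¹ = ((w - 1) / w) ^ 2 := by
        field_simp
        ring
      rw [this]
      positivity
  set w : ℝ := Real.sqrt (1 + v) with hwdef
  have hw1 : (1:ℝ) ≤ w := by
    rw [hwdef]
    have h1 : Real.sqrt 1 ≤ Real.sqrt (1 + v) := Real.sqrt_le_sqrt (by linarith)
    simpa using h1
  have hwpos : (0:ℝ) < w := by linarith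
  have hw2 : w * w = 1 + v := Real.mul_self_sqrt (by linarith)
  have h1 : h 1 ≤ h w := hmono (mem_Ici.2 le_rfl) (mem_Ici.2 hw1) hw1
  have h10 : h 1 = 0 := by simp [hh]
  rw [h10] at h1
  simp only [hh] at h1
  have hlog : Real.log (1 + v) = 2 * Real.log w := by
    rw [hwdef, Real.log_sqrt (by linarith)]
    ring
  rw [hlog]
  have : w - 1 / w = v / w := by
    field_simp
    linarith [hw2]
  linarith [this ▸ h1]

set_option maxHeartbeats 1000000 in
/-- under Condition 2, for α ≥ 2, f(x) ≤ f(1) for all x ≥ 1. -/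
theorem stmt_1 (α τ η β : ℝ) (hα : 2 ≤ α)
    (hτ : 0 < τ) (hη : 0 < η) (hβ : 0 < β)
    (hcond1 : α * (2 ^ (α - 1) - 1) / (τ * (α - 1)) > 1)
    (hcond2 : Real.log (1 + η) ≤ τ)
    (hcond3 : β ≥ max ((α - 1) / (τ - τ ^ α * (τ + Real.log (1 + η)) ^ (1 - α)))
      (α * (2 ^ (α - 1) - 1) / (τ * (α - 1)) + 1 / η)) :
    ∀ x : ℝ, 1 ≤ x → f α τ η β x ≤ f α τ η β 1 := by
  have hα0 : (0:ℝ) < α - 1 := by linarith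
  have hQ1 : (1:ℝ) ≤ 2 ^ (α - 1) - 1 := by
    have h := Real.rpow_le_rpow_of_exponent_le (by norm_num : (1:ℝ) ≤ 2)
      (by linarith : (1:ℝ) ≤ α - 1)
    rw [Real.rpow_one] at h
    linarith
  have hτα : τ * (α - 1) < α * (2 ^ (α - 1) - 1) := by
    have h := (lt_div_iff₀ (by positivity : (0:ℝ) < τ * (α - 1))).1 hcond1
    linarith
  have hb2 : α * (2 ^ (α - 1) - 1) / (τ * (α - 1)) + 1 / η ≤ β :=
    le_trans (le_max_right _ _) hcond3
  have hc : α * (2 ^ (α - 1) - 1) * η ≤ τ * (α - 1) * (η * β - 1) := by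
    have h2 := mul_le_mul_of_nonneg_left hb2 hη.le
    rw [mul_add, mul_one_div, div_self hη.ne'] at h2
    have h3 := mul_le_mul_of_nonneg_right
      (show η * (α * (2 ^ (α - 1) - 1) / (τ * (α - 1))) ≤ η * β - 1 by linarith)
      (show (0:ℝ) ≤ τ * (α - 1) by positivity)
    have h4 : η * (α * (2 ^ (α - 1) - 1) / (τ * (α - 1))) * (τ * (α - 1))
        = α * (2 ^ (α - 1) - 1) * η := by
      field_simp
    rw [h4] at h3
    linarith
  have h6 : α * (2 ^ (α - 1) - 1) * η / 2 + (α - 1) * τ + (α - 1) * τ * η / 2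
      ≤ (α - 1) * τ * η * β := by
    have h7 := mul_le_mul_of_nonneg_right hτα.le hη.le
    nlinarith [hc, h7]
  -- the derivative of f
  have hder : ∀ x : ℝ, 1 ≤ x → HasDerivAt (f α τ η β)
      ((1 * (τ + Real.log (1 + η / ((x - 1) * η * β + 1))) ^ (1 - α) +
        x * ((0 * ((x - 1) * η * β + 1) - η * (1 * η * β)) / ((x - 1) * η * β + 1) ^ 2 /
          (1 + η / ((x - 1) * η * β + 1)) * (1 - α) *
          (τ + Real.log (1 + η / ((x - 1) * η * β + 1))) ^ (1 - α - 1))) / (1 - α) -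
        1 * τ ^ (1 - α) / (1 - α)) x := by
    intro x hx
    have hA0 : (0:ℝ) < (x - 1) * η * β + 1 := by
      have h0 := mul_nonneg (mul_nonneg (by linarith : (0:ℝ) ≤ x - 1) hη.le) hβ.le
      linarith
    have hg0 : (0:ℝ) < 1 + η / ((x - 1) * η * β + 1) := by positivity
    have hs0 : (0:ℝ) < τ + Real.log (1 + η / ((x - 1) * η * β + 1)) := by
      have h := Real.log_nonneg (by nlinarith [div_pos hη hA0] :
        (1:ℝ) ≤ 1 + η / ((x - 1) * η * β + 1))
      linarith
    have hA : HasDerivAt (fun y : ℝ => (y - 1) * η * β + 1) (1 * η * β) x :=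
      ((((hasDerivAt_id x).sub_const 1).mul_const η).mul_const β).add_const 1
    have hgd : HasDerivAt (fun y : ℝ => 1 + η / ((y - 1) * η * β + 1))
        ((0 * ((x - 1) * η * β + 1) - η * (1 * η * β)) / ((x - 1) * η * β + 1) ^ 2) x :=
      ((hasDerivAt_const x η).div hA hA0.ne').const_add 1
    have hsd := (hgd.log hg0.ne').const_add τ
    have hP := hsd.rpow_const (p := 1 - α) (Or.inl hs0.ne')
    have hxP := ((hasDerivAt_id x).mul hP).div_const (1 - α)
    have hlin : HasDerivAt (fun y : ℝ => (y - 1) * τ ^ (1 - α) / (1 - α))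
        (1 * τ ^ (1 - α) / (1 - α)) x :=
      (((hasDerivAt_id x).sub_const 1).mul_const (τ ^ (1 - α))).div_const (1 - α)
    exact hxP.sub hlin
  have anti : AntitoneOn (f α τ η β) (Set.Ici 1) := by
    apply antitoneOn_of_deriv_nonpos (convex_Ici 1)
    · intro x hx
      exact (hder x hx).continuousAt.continuousWithinAt
    · rw [interior_Ici]
      intro x hx
      exact (hder x (le_of_lt hx)).differentiableAt.differentiableWithinAt
    · rw [interior_Ici]
      intro x hx
      have hx1 : (1:ℝ) ≤ x := le_of_lt hx
      rw [(hder x hx1).deriv]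
      set A : ℝ := (x - 1) * η * β + 1 with hAdef
      have hA1 : (1:ℝ) ≤ A := by
        have h0 := mul_nonneg (mul_nonneg (by linarith : (0:ℝ) ≤ x - 1) hη.le) hβ.le
        rw [hAdef]
        linarith
      have hApos : (0:ℝ) < A := by linarith
      have hAη : (0:ℝ) < A + η := by linarith
      set s : ℝ := Real.log (1 + η / A) with hsdef
      have hvpos : (0:ℝ) < η / A := div_pos hη hApos
      have hspos : (0:ℝ) < s := Real.log_pos (by linarith)
      have hsτ : s ≤ τ := by
        have h1 : η / A ≤ η := by
          rw [div_le_iff₀ hApos]; nlinarith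
        have h2 : s ≤ Real.log (1 + η) := by
          rw [hsdef]; exact Real.log_le_log (by linarith) (by linarith)
        linarith
      have hps : (0:ℝ) < τ + s := by linarith
      have hxA : x * η * β = A - 1 + η * β := by rw [hAdef]; ring
      -- bounds on s via sqrt
      have hw2 : Real.sqrt (1 + η / A) * Real.sqrt (1 + η / A) = 1 + η / A :=
        Real.mul_self_sqrt (by positivity)
      have hwpos : (0:ℝ) < Real.sqrt (1 + η / A) := Real.sqrt_pos.2 (by positivity)
      have hsw : s ≤ (η / A) / Real.sqrt (1 + η / A) := log_le_div_sqrt hvpos.le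
      have hwle : Real.sqrt (1 + η / A) ≤ 1 + η / (2 * A) := by
        have h1 : (1:ℝ) + η / A ≤ (1 + η / (2 * A)) ^ 2 := by
          have h2 : (1 + η / (2 * A)) ^ 2 = 1 + η / A + (η / (2 * A)) ^ 2 := by
            field_simp; ring
          nlinarith [sq_nonneg (η / (2 * A))]
        calc Real.sqrt (1 + η / A) ≤ Real.sqrt ((1 + η / (2 * A)) ^ 2) :=
              Real.sqrt_le_sqrt h1
          _ = 1 + η / (2 * A) := Real.sqrt_sq (by positivity)
      have hs1 : s ≤ η * (2 * A + η) / (2 * A * (A + η)) := by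
        have h3 : (η / A) / Real.sqrt (1 + η / A)
            = (η / A) * Real.sqrt (1 + η / A) / (1 + η / A) := by
          rw [div_eq_div_iff hwpos.ne' (by positivity : (1:ℝ) + η / A ≠ 0), mul_assoc, hw2]
        have h4 : (η / A) * Real.sqrt (1 + η / A) / (1 + η / A)
            ≤ (η / A) * (1 + η / (2 * A)) / (1 + η / A) := by
          apply div_le_div_of_nonneg_right ?_ (by positivity)
          exact mul_le_mul_of_nonneg_left hwle hvpos.le
        have h5 : (η / A) * (1 + η / (2 * A)) / (1 + η / A)
            = η * (2 * A + η) / (2 * A * (A + η)) := by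
          field_simp
        calc s ≤ (η / A) / Real.sqrt (1 + η / A) := hsw
          _ = (η / A) * Real.sqrt (1 + η / A) / (1 + η / A) := h3
          _ ≤ (η / A) * (1 + η / (2 * A)) / (1 + η / A) := h4
          _ = η * (2 * A + η) / (2 * A * (A + η)) := h5
      have hs2 : s ^ 2 ≤ η ^ 2 / (A * (A + η)) := by
        have h3 : s ^ 2 ≤ ((η / A) / Real.sqrt (1 + η / A)) ^ 2 := by
          nlinarith [hsw, hspos]
        have h4 : ((η / A) / Real.sqrt (1 + η / A)) ^ 2 = η ^ 2 / (A * (A + η)) := by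
          rw [div_pow, sq (Real.sqrt (1 + η / A)), hw2]
          field_simp
        linarith [h4 ▸ h3]
      -- main inequality : (α-1) s + K s²/τ ≤ M
      have main_ineq : (α - 1) * s + α * (2 ^ (α - 1) - 1) / 2 * s ^ 2 / τ
          ≤ (α - 1) * η * (A - 1 + η * β) / (A * (A + η)) := by
        have step1 : (α - 1) * s + α * (2 ^ (α - 1) - 1) / 2 * s ^ 2 / τ
            ≤ (α - 1) * (η * (2 * A + η) / (2 * A * (A + η)))
              + α * (2 ^ (α - 1) - 1) / 2 * (η ^ 2 / (A * (A + η))) / τ := by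
          have t1 := mul_le_mul_of_nonneg_left hs1 hα0.le
          have t2 := div_le_div_of_nonneg_right (mul_le_mul_of_nonneg_left hs2
            (show (0:ℝ) ≤ α * (2 ^ (α - 1) - 1) / 2 by positivity)) hτ.le
          linarith
        have hdiff : (α - 1) * η * (A - 1 + η * β) / (A * (A + η))
            - ((α - 1) * (η * (2 * A + η) / (2 * A * (A + η)))
              + α * (2 ^ (α - 1) - 1) / 2 * (η ^ 2 / (A * (A + η))) / τ)
            = (2 * τ * (α - 1) * η ^ 2 * β - 2 * τ * (α - 1) * η - τ * (α - 1) * η ^ 2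
               - α * (2 ^ (α - 1) - 1) * η ^ 2) / (2 * A * (A + η) * τ) := by
          field_simp
          ring
        have hnum : (0:ℝ) ≤ 2 * τ * (α - 1) * η ^ 2 * β - 2 * τ * (α - 1) * η
            - τ * (α - 1) * η ^ 2 - α * (2 ^ (α - 1) - 1) * η ^ 2 := by
          nlinarith [mul_le_mul_of_nonneg_right h6 (show (0:ℝ) ≤ 2 * η by positivity)]
        have hpos2 : (0:ℝ) ≤ (2 * τ * (α - 1) * η ^ 2 * β - 2 * τ * (α - 1) * η
            - τ * (α - 1) * η ^ 2 - α * (2 ^ (α - 1) - 1) * η ^ 2) / (2 * A * (A + η) * τ) :=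
          div_nonneg hnum (by positivity)
        linarith
      -- rpow reduction
      have hpα : (0:ℝ) < (τ + s) ^ α := Real.rpow_pos_of_pos hps α
      have hτapos : (0:ℝ) < τ ^ α := Real.rpow_pos_of_pos hτ α
      have e1 : (τ + s) ^ (1 - α) = (τ + s) / (τ + s) ^ α := by
        rw [Real.rpow_sub hps, Real.rpow_one]
      have e2 : τ ^ (1 - α) = τ / τ ^ α := by
        rw [Real.rpow_sub hτ, Real.rpow_one]
      have e3 : (τ + s) ^ (1 - α - 1) = ((τ + s) ^ α)⁻¹ := by
        rw [show (1:ℝ) - α - 1 = -α by ring, Real.rpow_neg hps.le]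
      have hfac : (τ + s) ^ α = τ ^ α * (1 + s / τ) ^ α := by
        rw [← Real.mul_rpow hτ.le (by positivity : (0:ℝ) ≤ 1 + s / τ)]
        congr 1
        field_simp
      have hquad := quad_bound hα (by positivity : (0:ℝ) ≤ s / τ) ((div_le_one hτ).2 hsτ)
      have hq2 : τ * (1 + s / τ) ^ α
          ≤ τ + α * s + α * (2 ^ (α - 1) - 1) / 2 * s ^ 2 / τ := by
        have h8 := mul_le_mul_of_nonneg_left hquad hτ.le
        have h9 : τ * (1 + α * (s / τ) + α * (2 ^ (α - 1) - 1) / 2 * (s / τ) ^ 2)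
            = τ + α * s + α * (2 ^ (α - 1) - 1) / 2 * s ^ 2 / τ := by
          field_simp
        linarith [h9 ▸ h8]
      set M : ℝ := (α - 1) * η * (A - 1 + η * β) / (A * (A + η)) with hMdef
      have hkey : τ ^ (1 - α) ≤ (τ + s) ^ (1 - α) + M * (τ + s) ^ (1 - α - 1) := by
        rw [e1, e2, e3]
        have comb : (τ + s) / (τ + s) ^ α + M * ((τ + s) ^ α)⁻¹
            = (τ + s + M) / (τ + s) ^ α := by
          field_simp
        rw [comb, div_le_div_iff₀ hτapos hpα]
        calc τ * (τ + s) ^ α = τ ^ α * (τ * (1 + s / τ) ^ α) := by rw [hfac]; ring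
          _ ≤ τ ^ α * (τ + α * s + α * (2 ^ (α - 1) - 1) / 2 * s ^ 2 / τ) :=
              mul_le_mul_of_nonneg_left hq2 hτapos.le
          _ ≤ τ ^ α * (τ + s + M) := by
              apply mul_le_mul_of_nonneg_left _ hτapos.le
              linarith [main_ineq]
          _ = (τ + s + M) * τ ^ α := by ring
      rw [div_sub_div_same]
      rw [div_nonpos_iff]
      left
      refine ⟨?_, by linarith⟩
      have hMeq : x * ((0 * A - η * (1 * η * β)) / A ^ 2 / (1 + η / A) * (1 - α) *
          (τ + s) ^ (1 - α - 1)) = M * (τ + s) ^ (1 - α - 1) := by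
        rw [hMdef, ← hxA]
        field_simp
        ring
      rw [hMeq]
      linarith [hkey]
  intro x hx
  exact anti Set.self_mem_Ici hx hx
end

section
/- Let τ, η, β be real numbers with τ > 0, η > 0, β > 0, and suppose Condition 3 holds: τ < 1 and β ≥ max( 1/η + 1/τ, 1/(τ·log(1 + log(1+η)/τ)) ). Then f₁(x) ≤ f₁(1) for all real x ≥ 1. -/
open Real Filter

/-- The function `f₁` from the paper (Eq. (48)):
`f₁(x) = x·log(τ + log(1 + η/((x−1)ηβ + 1))) − (x−1)·log τ`. -/
noncomputable def f₁ (τ η β : ℝ) : ℝ → ℝ := fun x =>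
  x * Real.log (τ + Real.log (1 + η / ((x - 1) * η * β + 1)))
    - (x - 1) * Real.log τ

private lemma log_le_half_sub (w : ℝ) (hw : 1 ≤ w) : Real.log w ≤ (w - 1 / w) / 2 := by
  have hw0 : 0 < w := lt_of_lt_of_le one_pos hw
  have h0 : 0 ≤ Real.log w := Real.log_nonneg hw
  have h := Real.self_le_sinh_iff.mpr h0
  rwa [Real.sinh_eq, Real.exp_log hw0, Real.exp_neg, Real.exp_log hw0,
    inv_eq_one_div] at h

private lemma key_ineq (τ u : ℝ) (hτ : 0 < τ) (hτ1 : τ ≤ 1) (hu : 0 ≤ u) :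
    τ * ((τ + Real.log (1 + u)) *
      ((Real.log (τ + Real.log (1 + u)) - Real.log τ) * (1 + u)))
      ≤ τ * u + u ^ 2 := by
  set L := Real.log (1 + u) with hLdef
  have hu1 : (0:ℝ) < 1 + u := by linarith
  have hL0 : 0 ≤ L := Real.log_nonneg (by linarith)
  have hA : 0 < τ + L := by linarith
  -- s1 : τ*(τ+L)*g ≤ τ*L + L^2/2
  have h1 : Real.log (τ + L) - Real.log τ ≤ ((τ + L) / τ - τ / (τ + L)) / 2 := by
    have := log_le_half_sub ((τ + L) / τ) (by rw [le_div_iff₀ hτ]; linarith)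
    rwa [Real.log_div hA.ne' hτ.ne', one_div, inv_div] at this
  have s1 : τ * ((τ + L) * (Real.log (τ + L) - Real.log τ)) ≤ τ * L + L ^ 2 / 2 := by
    have h2 := mul_le_mul_of_nonneg_left h1 (by positivity : (0:ℝ) ≤ τ * (τ + L))
    have e : τ * (τ + L) * (((τ + L) / τ - τ / (τ + L)) / 2) = τ * L + L ^ 2 / 2 := by
      field_simp
      ring
    nlinarith [h2]
  -- s2 : L + L^2/2 ≤ u
  have s2 : L + L ^ 2 / 2 ≤ u := by
    have h3 := Real.quadratic_le_exp_of_nonneg hL0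
    rw [hLdef, Real.exp_log hu1] at h3
    linarith
  -- s3 : u ≤ (1+u)*L
  have s3 : u ≤ (1 + u) * L := by
    have h4 : Real.log (1 / (1 + u)) ≤ 1 / (1 + u) - 1 :=
      Real.log_le_sub_one_of_pos (by positivity)
    rw [Real.log_div one_ne_zero hu1.ne', Real.log_one] at h4
    have h5 : 1 - 1 / (1 + u) ≤ L := by linarith
    have h6 := mul_le_mul_of_nonneg_right h5 hu1.le
    have e : (1 - 1 / (1 + u)) * (1 + u) = u := by field_simp; ring
    nlinarith [h6]
  -- combine
  have hg0 : 0 ≤ Real.log (τ + L) - Real.log τ := by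
    have := Real.log_le_log_iff hτ hA
    simp only [sub_nonneg]
    exact (Real.log_le_log_iff hτ hA).mpr (by linarith)
  have p1 : 0 ≤ (1 - τ) * ((1 + u) * L - u) := mul_nonneg (by linarith) (by linarith)
  have p2 : 0 ≤ (1 + u) * (u - (L + L ^ 2 / 2)) := mul_nonneg hu1.le (by linarith)
  have s1' := mul_le_mul_of_nonneg_right s1 hu1.le
  nlinarith [s1', p1, p2]

/-- under Condition 3 (τ < 1 and the lower bound on β),
f₁(x) ≤ f₁(1) for all x ≥ 1. -/
theorem stmt_2 (τ η β : ℝ) (hτ : 0 < τ) (hη : 0 < η) (hβ : 0 < β)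
    (hcond1 : τ < 1)
    (hcond2 : β ≥ max (1 / η + 1 / τ)
      (1 / (τ * Real.log (1 + Real.log (1 + η) / τ)))) :
    ∀ x : ℝ, 1 ≤ x → f₁ τ η β x ≤ f₁ τ η β 1 := by
  -- condition: τ * (η*β) ≥ τ + η
  have hβ1 : 1 / η + 1 / τ ≤ β := le_trans (le_max_left _ _) hcond2
  have hm : τ + η ≤ τ * (η * β) := by
    have h := mul_le_mul_of_nonneg_left hβ1 (by positivity : (0:ℝ) ≤ τ * η)
    have e : τ * η * (1 / η + 1 / τ) = τ + η := by field_simp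
    nlinarith [h]
  -- auxiliary function ψ
  set ψ : ℝ → ℝ := fun y =>
    y * (Real.log (τ + (Real.log ((y - 1) * η * β + 1 + η)
      - Real.log ((y - 1) * η * β + 1))) - Real.log τ) with hψdef
  have hDpos : ∀ y : ℝ, 1 ≤ y → 0 < (y - 1) * η * β + 1 := by
    intro y hy; nlinarith
  have hA : ∀ y : ℝ, 1 ≤ y → f₁ τ η β y = ψ y + Real.log τ := by
    intro y hy
    have hD := hDpos y hy
    have hrw : Real.log (1 + η / ((y - 1) * η * β + 1))
        = Real.log ((y - 1) * η * β + 1 + η) - Real.log ((y - 1) * η * β + 1) := by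
      rw [show 1 + η / ((y - 1) * η * β + 1)
          = ((y - 1) * η * β + 1 + η) / ((y - 1) * η * β + 1) by rw [add_div, div_self hD.ne'],
        Real.log_div (by positivity) hD.ne']
    simp only [f₁, hψdef, hrw]
    ring
  -- derivative of ψ
  have hder : ∀ x : ℝ, 1 ≤ x →
      HasDerivAt ψ
        (1 * (Real.log (τ + (Real.log ((x - 1) * η * β + 1 + η)
            - Real.log ((x - 1) * η * β + 1))) - Real.log τ)
          + x * ((η * β / ((x - 1) * η * β + 1 + η) - η * β / ((x - 1) * η * β + 1))
            / (τ + (Real.log ((x - 1) * η * β + 1 + η)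
              - Real.log ((x - 1) * η * β + 1))))) x := by
    intro x hx
    have hD := hDpos x hx
    have hDη : (0:ℝ) < (x - 1) * η * β + 1 + η := by linarith
    have hc : HasDerivAt (fun y : ℝ => (y - 1) * η * β + 1) (η * β) x := by
      have h := ((((hasDerivAt_id x).sub_const 1).mul_const η).mul_const β).add_const 1
      simpa using h
    have hS : HasDerivAt (fun y : ℝ => Real.log ((y - 1) * η * β + 1 + η))
        (η * β / ((x - 1) * η * β + 1 + η)) x := (hc.add_const η).log hDη.ne'
    have hT : HasDerivAt (fun y : ℝ => Real.log ((y - 1) * η * β + 1))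
        (η * β / ((x - 1) * η * β + 1)) x := hc.log hD.ne'
    have hi : HasDerivAt (fun y : ℝ => τ + (Real.log ((y - 1) * η * β + 1 + η)
        - Real.log ((y - 1) * η * β + 1)))
        (η * β / ((x - 1) * η * β + 1 + η) - η * β / ((x - 1) * η * β + 1)) x :=
      (hS.sub hT).const_add τ
    have hipos : 0 < τ + (Real.log ((x - 1) * η * β + 1 + η)
        - Real.log ((x - 1) * η * β + 1)) := by
      have := (Real.log_le_log_iff hD hDη).mpr (by linarith)
      linarith
    have hG := (hi.log hipos.ne').sub_const (Real.log τ)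
    exact (hasDerivAt_id x).mul hG
  -- antitone
  have hanti : AntitoneOn ψ (Set.Ici 1) := by
    apply antitoneOn_of_deriv_nonpos (convex_Ici 1)
    · intro y hy
      exact ((hder y hy).differentiableAt.continuousAt).continuousWithinAt
    · intro y hy
      rw [interior_Ici] at hy
      exact ((hder y (le_of_lt hy)).differentiableAt).differentiableWithinAt
    · intro x hx
      rw [interior_Ici] at hx
      have hx1 : 1 ≤ x := le_of_lt hx
      rw [(hder x hx1).deriv]
      set D := (x - 1) * η * β + 1 with hDdef
      have hD : 0 < D := hDpos x hx1
      have hD1 : 1 ≤ D := by simp only [hDdef]; nlinarith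
      have hDη : (0:ℝ) < D + η := by linarith
      set L := Real.log (D + η) - Real.log D with hLdef
      have hL0 : 0 ≤ L := by
        have := (Real.log_le_log_iff hD hDη).mpr (by linarith)
        simp only [hLdef]; linarith
      have hipos : 0 < τ + L := by linarith
      set g := Real.log (τ + L) - Real.log τ with hgdef
      -- instantiate key inequality with u = η/D
      have hu : 0 ≤ η / D := by positivity
      have hk := key_ineq τ (η / D) hτ hcond1.le hu
      have hL' : Real.log (1 + η / D) = L := by
        rw [show 1 + η / D = (D + η) / D by field_simp,
          Real.log_div hDη.ne' hD.ne', hLdef]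
      rw [hL'] at hk
      -- multiply by D^2
      have hk2 : τ * ((τ + L) * (g * (D * (D + η)))) ≤ τ * η * D + η ^ 2 := by
        have h := mul_le_mul_of_nonneg_right hk (by positivity : (0:ℝ) ≤ D ^ 2)
        have eL : τ * ((τ + L) * (g * (1 + η / D))) * D ^ 2
            = τ * ((τ + L) * (g * (D * (D + η)))) := by
          field_simp
        have eR : (τ * (η / D) + (η / D) ^ 2) * D ^ 2 = τ * η * D + η ^ 2 := by
          field_simp
        rw [eL, eR] at h
        exact h
      -- use the β condition : η^2 ≤ η*(τ*(η*β) - τ)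
      have hk3 : (τ + L) * (g * (D * (D + η))) ≤ η * (x * (η * β)) := by
        have hid : D + (η * β) - 1 = x * (η * β) := by simp only [hDdef]; ring
        have h1 : τ * η * D + η ^ 2 ≤ τ * (η * (x * (η * β))) := by
          rw [← hid]
          nlinarith [mul_le_mul_of_nonneg_right hm hη.le]
        have h2 : τ * ((τ + L) * (g * (D * (D + η)))) ≤ τ * (η * (x * (η * β))) :=
          le_trans hk2 h1
        exact le_of_mul_le_mul_left h2 hτ
      -- conclude nonpositivity
      have hg0 : 0 ≤ g := by
        simp only [hgdef, sub_nonneg]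
        exact (Real.log_le_log_iff hτ hipos).mpr (by linarith)
      have hgle : g ≤ x * (η * β) * η / (D * (D + η) * (τ + L)) := by
        rw [le_div_iff₀ (by positivity)]
        nlinarith [hk3]
      have heq : x * ((η * β / (D + η) - η * β / D) / (τ + L))
          = -(x * (η * β) * η / (D * (D + η) * (τ + L))) := by
        field_simp
        ring
      rw [heq]
      linarith
  -- finish
  intro x hx
  rw [hA x hx, hA 1 le_rfl]
  have := hanti (Set.mem_Ici.mpr le_rfl) (Set.mem_Ici.mpr hx) hx
  linarith
end

section
/- Let α, τ, η, β be real numbers with α ∈ (0,2), α ≠ 1, η > 0, 0 < τ < α, and β ≥ α/τ + 1/η. Then the function f is quasiconvex on the interval [1, ∞). -/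
open Real Filter

lemma sinh_key {t : ℝ} (ht : 0 ≤ t) : t * Real.exp (t/2) ≤ Real.exp t - 1 := by
  have h1 : t/2 ≤ Real.sinh (t/2) := Real.self_le_sinh_iff.2 (by linarith)
  rw [Real.sinh_eq] at h1
  have h2 : Real.exp t - 1 = Real.exp (t/2) * (Real.exp (t/2) - Real.exp (-(t/2))) := by
    rw [mul_sub, ← Real.exp_add, ← Real.exp_add]; norm_num [Real.exp_zero]
  rw [h2]
  have h3 : t ≤ Real.exp (t/2) - Real.exp (-(t/2)) := by linarith
  have h4 := Real.exp_pos (t/2)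
  nlinarith [Real.exp_pos (t/2)]

lemma log_quad {r : ℝ} (hr : 0 ≤ r) :
    Real.log (1+r) + (Real.log (1+r))^2/2 ≤ r := by
  set t := Real.log (1+r) with ht
  have h1 : 0 ≤ t := Real.log_nonneg (by linarith)
  have h2 : Real.exp t = 1 + r := Real.exp_log (by linarith)
  have h3 := sinh_key h1
  have h4 : 1 + t/2 ≤ Real.exp (t/2) := by linarith [Real.add_one_le_exp (t/2)]
  nlinarith

lemma log_sq {r : ℝ} (hr : 0 ≤ r) :
    (Real.log (1+r))^2 * (1+r) ≤ r^2 := by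
  set t := Real.log (1+r) with ht
  have h1 : 0 ≤ t := Real.log_nonneg (by linarith)
  have h2 : Real.exp t = 1 + r := Real.exp_log (by linarith)
  have h3 := sinh_key h1
  have h5 : Real.exp (t/2) * Real.exp (t/2) = Real.exp t := by
    rw [← Real.exp_add]; norm_num [Real.exp_zero]
  nlinarith [mul_nonneg h1 (Real.exp_pos (t/2)).le, Real.exp_pos (t/2)]

lemma bernoulli_neg {p h : ℝ} (hp0 : -1 ≤ p) (hp1 : p ≤ 0) (hh : 0 ≤ h) :
    1 + p * h ≤ (1 + h) ^ p := by
  have h1 : (0:ℝ) < 1 + h := by linarith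
  have hb : (1 + h) ^ (-p) ≤ 1 + (-p) * h :=
    rpow_one_add_le_one_add_mul_self (by linarith) (by linarith) (by linarith)
  have h2 : (0:ℝ) < (1 + h) ^ (-p) := Real.rpow_pos_of_pos h1 _
  have h3 : (1 + h) ^ p = ((1 + h) ^ (-p))⁻¹ := by
    rw [← Real.rpow_neg h1.le, neg_neg]
  rw [h3]
  rcases le_or_gt (1 + p * h) 0 with hc | hc
  · exact hc.trans (by positivity)
  have h4 : (0:ℝ) < 1 + (-p) * h := by nlinarith
  have h5 : (1 + (-p) * h)⁻¹ ≤ ((1 + h) ^ (-p))⁻¹ := inv_anti₀ h2 hb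
  refine le_trans ?_ h5
  rw [inv_eq_one_div, le_div_iff₀ h4]
  nlinarith [sq_nonneg (p*h)]

lemma nonneg_of_deriv (F F' : ℝ → ℝ) (h0 : F 0 = 0)
    (hd : ∀ x : ℝ, 0 ≤ x → HasDerivAt F (F' x) x)
    (hpos : ∀ x : ℝ, 0 < x → 0 ≤ F' x) {h : ℝ} (hh : 0 ≤ h) : 0 ≤ F h := by
  have mono : MonotoneOn F (Set.Ici 0) := by
    apply monotoneOn_of_deriv_nonneg (convex_Ici 0)
    · exact fun x hx => (hd x hx).continuousAt.continuousWithinAt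
    · rw [interior_Ici]
      exact fun x hx => (hd x (le_of_lt hx)).differentiableAt.differentiableWithinAt
    · rw [interior_Ici]
      intro x hx
      rw [(hd x hx.le).deriv]
      exact hpos x hx
  have := mono Set.self_mem_Ici (Set.mem_Ici.2 hh) hh
  rwa [h0] at this

lemma psi_bound {α : ℝ} (hα0 : 0 < α) (hα2 : α ≤ 2) (hα1 : α ≠ 1) {h : ℝ} (hh : 0 ≤ h) :
    ((1+h) - (1+h)^α)/(1-α) ≤ h + α/2*h^2 := by
  rcases lt_trichotomy α 1 with hα | hα | hα
  · -- α < 1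
    set F : ℝ → ℝ := fun x => (1+x)^α - (1+x) + (1-α)*(x + α/2*x^2) with hF
    have key : 0 ≤ F h := by
      apply nonneg_of_deriv F
        (fun x => α * (1+x)^(α-1) * 1 - 1 + (1-α)*(1 + α/2*(2*x)))
      · simp [hF, Real.one_rpow]
      · intro x hx
        have h1 : (0:ℝ) < 1 + x := by linarith
        have d1 : HasDerivAt (fun x : ℝ => (1+x)^α) (α * (1+x)^(α-1) * 1) x := by
          have := ((hasDerivAt_id x).const_add 1).rpow_const (p := α) (Or.inl h1.ne')
          simpa [mul_comm] using this
        have d2 : HasDerivAt (fun x : ℝ => 1 + x) (1:ℝ) x := (hasDerivAt_id x).const_add 1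
        have d3 : HasDerivAt (fun x : ℝ => x + α/2*x^2) (1 + α/2*(2*x)) x := by
          have := ((hasDerivAt_pow 2 x).const_mul (α/2))
          exact ((hasDerivAt_id' x).add this).congr_deriv (by simp)
        have D := (d1.sub d2).add (d3.const_mul (1-α))
        exact D
      · intro x hx
        have h1 : (0:ℝ) < 1 + x := by linarith
        have hb : 1 + (α-1) * x ≤ (1+x)^(α-1) :=
          bernoulli_neg (by linarith) (by linarith) hx.le
        nlinarith
      · exact hh
    have h1α : (0:ℝ) < 1 - α := by linarith
    rw [div_le_iff₀ h1α]
    simp only [hF] at key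
    nlinarith
  · exact absurd hα hα1
  · -- α > 1
    set G : ℝ → ℝ := fun x => (1+x) - (1+x)^α + (α-1)*(x + α/2*x^2) with hG
    have key : 0 ≤ G h := by
      apply nonneg_of_deriv G
        (fun x => 1 - α * (1+x)^(α-1) * 1 + (α-1)*(1 + α/2*(2*x)))
      · simp [hG, Real.one_rpow]
      · intro x hx
        have h1 : (0:ℝ) < 1 + x := by linarith
        have d1 : HasDerivAt (fun x : ℝ => (1+x)^α) (α * (1+x)^(α-1) * 1) x := by
          have := ((hasDerivAt_id x).const_add 1).rpow_const (p := α) (Or.inl h1.ne')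
          simpa [mul_comm] using this
        have d2 : HasDerivAt (fun x : ℝ => 1 + x) (1:ℝ) x := (hasDerivAt_id x).const_add 1
        have d3 : HasDerivAt (fun x : ℝ => x + α/2*x^2) (1 + α/2*(2*x)) x := by
          have := ((hasDerivAt_pow 2 x).const_mul (α/2))
          exact ((hasDerivAt_id' x).add this).congr_deriv (by simp)
        have D := (d2.sub d1).add (d3.const_mul (α-1))
        exact D
      · intro x hx
        have h1 : (0:ℝ) < 1 + x := by linarith
        have hb : (1+x)^(α-1) ≤ 1 + (α-1) * x :=
          rpow_one_add_le_one_add_mul_self (by linarith) (by linarith) (by linarith)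
        nlinarith
      · exact hh
    have h1α : (1:ℝ) - α < 0 := by linarith
    rw [div_le_iff_of_neg h1α]
    simp only [hG] at key
    nlinarith

lemma key_ineq_s3 {α τ η β w : ℝ} (hα0 : 0 < α) (hα2 : α < 2) (hα1 : α ≠ 1)
    (hη : 0 < η) (hτ0 : 0 < τ) (hτα : τ < α) (hβ : β ≥ α / τ + 1 / η) (hw : 1 ≤ w) :
    ((τ + Real.log (1 + η/w))^(1-α) - τ^(1-α))/(1-α)
      ≤ ((w - 1 + η*β)/(η*β)) * (τ + Real.log (1 + η/w))^(-α) * (η^2*β/(w*(w+η))) := by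
  have hw0 : (0:ℝ) < w := by linarith
  set r : ℝ := η / w with hrdef
  have hr : 0 < r := div_pos hη hw0
  set L : ℝ := Real.log (1 + r) with hLdef
  have hL : 0 < L := Real.log_pos (by linarith)
  set g : ℝ := τ + L with hgdef
  have hg : 0 < g := by linarith
  have hga : (0:ℝ) < g ^ (-α) := Real.rpow_pos_of_pos hg _
  -- Step A : (g - g^α * τ^(1-α))/(1-α) ≤ L + α/(2τ) L²
  have stepA : (g - g^α * τ^(1-α))/(1-α) ≤ L + α/(2*τ)*L^2 := by
    have hpsi := psi_bound hα0 hα2.le hα1 (h := L/τ) (by positivity)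
    have e1 : τ * (1 + L/τ) = g := by field_simp [hgdef]; exact hgdef.symm
    have e2 : τ * (1 + L/τ)^α = g^α * τ^(1-α) := by
      have : (1 + L/τ) = g / τ := by field_simp [hgdef]; exact hgdef.symm
      rw [this, Real.div_rpow hg.le hτ0.le, Real.rpow_sub hτ0, Real.rpow_one]
      field_simp
    have := mul_le_mul_of_nonneg_left hpsi hτ0.le
    have e0 : g - g^α * τ^(1-α) = τ * (1 + L/τ - (1 + L/τ)^α) := by
      rw [mul_sub, e1, e2]
    calc (g - g^α * τ^(1-α))/(1-α)
        = τ * ((1 + L/τ - (1 + L/τ)^α)/(1-α)) := by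
          rw [e0, mul_div_assoc]
      _ ≤ τ * (L/τ + α/2*(L/τ)^2) := this
      _ = L + α/(2*τ)*L^2 := by field_simp
  -- Step B : L + α/(2τ) L² ≤ r + (α/τ - 1) * (r²/(1+r))
  have stepB : L + α/(2*τ)*L^2 ≤ r + (α/τ - 1) * (r^2/(1+r)) := by
    have h1 := log_quad hr.le
    have h2 := log_sq hr.le
    rw [← hLdef] at h1 h2
    have ha : 1 < α/τ := (one_lt_div hτ0).2 hτα
    have hL2 : L^2 ≤ r^2/(1+r) := by
      rw [le_div_iff₀ (by linarith)]; linarith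
    have hr2 : 0 ≤ r^2/(1+r) := by positivity
    calc L + α/(2*τ)*L^2 = (L + L^2/2) + (α/τ - 1)/2 * L^2 := by ring
      _ ≤ r + (α/τ - 1)/2 * (r^2/(1+r)) := by
          have := mul_le_mul_of_nonneg_left hL2 (by linarith : (0:ℝ) ≤ (α/τ - 1)/2)
          linarith
      _ ≤ r + (α/τ - 1) * (r^2/(1+r)) := by nlinarith
  -- Step C : r + (α/τ - 1) * (r²/(1+r)) ≤ (w-1+ηβ)/(ηβ) * (η²β/(w(w+η)))
  have stepC : r + (α/τ - 1) * (r^2/(1+r)) ≤ ((w - 1 + η*β)/(η*β)) * (η^2*β/(w*(w+η))) := by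
    have hβ0 : 0 < β := lt_of_lt_of_le (by positivity) hβ
    have e3 : r^2/(1+r) = η^2/(w*(w+η)) := by
      rw [hrdef]; field_simp
    have e4 : ((w - 1 + η*β)/(η*β)) * (η^2*β/(w*(w+η))) = η*(w - 1 + η*β)/(w*(w+η)) := by
      field_simp
    have e5 : r = η/w := hrdef
    rw [e3, e4, e5]
    have hηβ : α/τ*η + 1 ≤ η*β := by
      have := mul_le_mul_of_nonneg_left hβ hη.le
      calc α/τ*η + 1 = η * (α/τ + 1/η) := by field_simp
        _ ≤ η * β := this
    have e6 : η/w + (α/τ - 1)*(η^2/(w*(w+η))) = (η*(w+η) + (α/τ - 1)*η^2)/(w*(w+η)) := by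
      field_simp
    have e7 : η*(w+η) + (α/τ - 1)*η^2 ≤ η*(w - 1 + η*β) := by nlinarith [hηβ, hη]
    rw [e6]
    gcongr
  -- Step D : rewrite LHS with g^(-α) factored
  have eA : g^(-α) * g = g^(1-α) := by
    calc g^(-α) * g = g^(-α) * g^(1:ℝ) := by rw [Real.rpow_one]
      _ = g^(-α+1) := (Real.rpow_add hg _ _).symm
      _ = g^(1-α) := by ring_nf
  have eB : g^(-α) * (g^α * τ^(1-α)) = τ^(1-α) := by
    rw [← mul_assoc, ← Real.rpow_add hg]
    norm_num
  have stepD : (g^(1-α) - τ^(1-α))/(1-α) = g^(-α) * ((g - g^α * τ^(1-α))/(1-α)) := by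
    rw [← mul_div_assoc, mul_sub, eA, eB]
  rw [stepD]
  calc g^(-α) * ((g - g^α * τ^(1-α))/(1-α))
      ≤ g^(-α) * (L + α/(2*τ)*L^2) := by
        exact mul_le_mul_of_nonneg_left stepA hga.le
    _ ≤ g^(-α) * (((w - 1 + η*β)/(η*β)) * (η^2*β/(w*(w+η)))) := by
        apply mul_le_mul_of_nonneg_left _ hga.le
        exact le_trans stepB stepC
    _ = ((w - 1 + η*β)/(η*β)) * g^(-α) * (η^2*β/(w*(w+η))) := by ring

lemma hasDerivAt_f_s3 {α τ η β : ℝ} (hη : 0 < η) (hτ0 : 0 < τ) (hβ0 : 0 < β)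
    {x : ℝ} (hx : 1 ≤ x) (hα1 : α ≠ 1) :
    HasDerivAt (f α τ η β)
      ((τ + Real.log (1 + η / ((x - 1) * η * β + 1))) ^ (1 - α) / (1 - α)
        - τ ^ (1 - α) / (1 - α)
        + x * (τ + Real.log (1 + η / ((x - 1) * η * β + 1))) ^ (1 - α - 1)
            * (-(η ^ 2 * β / (((x - 1) * η * β + 1) * (((x - 1) * η * β + 1) + η))))) x := by
  set w : ℝ := (x - 1) * η * β + 1 with hwdef
  have hw0 : (0:ℝ) < w := by
    have : 0 ≤ (x - 1) * η * β := mul_nonneg (mul_nonneg (by linarith) hη.le) hβ0.le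
    simp only [hwdef]; linarith
  have hu : HasDerivAt (fun y : ℝ => (y - 1) * η * β + 1) (1 * η * β) x :=
    (((hasDerivAt_id x).sub_const 1).mul_const η).mul_const β |>.add_const 1
  have hv : HasDerivAt (fun y : ℝ => η / ((y - 1) * η * β + 1))
      ((0 * w - η * (1 * η * β)) / w ^ 2) x :=
    (hasDerivAt_const x η).div hu hw0.ne'
  have hv1 : HasDerivAt (fun y : ℝ => 1 + η / ((y - 1) * η * β + 1))
      ((0 * w - η * (1 * η * β)) / w ^ 2) x := hv.const_add 1
  have hvpos : (0:ℝ) < 1 + η / w := by positivity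
  have hlog : HasDerivAt (fun y : ℝ => Real.log (1 + η / ((y - 1) * η * β + 1)))
      ((0 * w - η * (1 * η * β)) / w ^ 2 / (1 + η / w)) x := hv1.log hvpos.ne'
  have hg : HasDerivAt (fun y : ℝ => τ + Real.log (1 + η / ((y - 1) * η * β + 1)))
      ((0 * w - η * (1 * η * β)) / w ^ 2 / (1 + η / w)) x := hlog.const_add τ
  have hgpos : (0:ℝ) < τ + Real.log (1 + η / w) := by
    have : (0:ℝ) ≤ Real.log (1 + η / w) := Real.log_nonneg (by nlinarith [div_pos hη hw0])
    linarith
  have hrpow : HasDerivAt (fun y : ℝ => (τ + Real.log (1 + η / ((y - 1) * η * β + 1))) ^ (1 - α))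
      ((0 * w - η * (1 * η * β)) / w ^ 2 / (1 + η / w) * (1 - α)
        * (τ + Real.log (1 + η / ((x - 1) * η * β + 1))) ^ (1 - α - 1)) x :=
    hg.rpow_const (Or.inl hgpos.ne')
  have hmul := (hasDerivAt_id x).mul hrpow
  have hlin : HasDerivAt (fun y : ℝ => (y - 1) * τ ^ (1 - α)) (1 * τ ^ (1 - α)) x :=
    ((hasDerivAt_id x).sub_const 1).mul_const _
  have total := (hmul.div_const (1 - α)).sub (hlin.div_const (1 - α))
  refine total.congr_deriv (Eq.symm ?_)
  have h1α : (1:ℝ) - α ≠ 0 := by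
    intro h; exact hα1 (by linarith)
  rw [← hwdef]
  have hwη : (0:ℝ) < w + η := by linarith
  have hvne : (1:ℝ) + η / w ≠ 0 := by positivity
  simp only [id_eq]
  field_simp
  ring

/-- for α ∈ (0,2), α ≠ 1, 0 < τ < α and β ≥ α/τ + 1/η,
the function f is quasiconvex on [1, ∞). -/
theorem stmt_3 (α τ η β : ℝ) (hα0 : 0 < α) (hα2 : α < 2) (hα1 : α ≠ 1)
    (hη : 0 < η) (hτ0 : 0 < τ) (hτα : τ < α)
    (hβ : β ≥ α / τ + 1 / η) :
    QuasiconvexOn ℝ (Set.Ici (1 : ℝ)) (f α τ η β) := by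
  have hβ0 : 0 < β := lt_of_lt_of_le (by positivity) hβ
  have hAnti : AntitoneOn (f α τ η β) (Set.Ici 1) := by
    apply antitoneOn_of_deriv_nonpos (convex_Ici 1)
    · exact fun x hx =>
        (hasDerivAt_f_s3 hη hτ0 hβ0 hx hα1).continuousAt.continuousWithinAt
    · rw [interior_Ici]
      exact fun x hx =>
        (hasDerivAt_f_s3 hη hτ0 hβ0 (le_of_lt hx) hα1).differentiableAt.differentiableWithinAt
    · rw [interior_Ici]
      intro x hx
      have hx1 : (1:ℝ) ≤ x := le_of_lt hx
      rw [(hasDerivAt_f_s3 hη hτ0 hβ0 hx1 hα1).deriv]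
      set w : ℝ := (x - 1) * η * β + 1 with hwdef
      have hw : 1 ≤ w := by rw [hwdef]; nlinarith [mul_nonneg (mul_nonneg (by linarith : (0:ℝ) ≤ x - 1) hη.le) hβ0.le]
      have hki := key_ineq_s3 hα0 hα2 hα1 hη hτ0 hτα hβ hw
      have hx_eq : (w - 1 + η*β)/(η*β) = x := by
        rw [hwdef]; field_simp; ring
      rw [hx_eq] at hki
      have hexp : (1 - α - 1 : ℝ) = -α := by ring
      rw [hexp]
      have hsub : (τ + Real.log (1 + η/w))^(1-α)/(1-α) - τ^(1-α)/(1-α)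
          = ((τ + Real.log (1 + η/w))^(1-α) - τ^(1-α))/(1-α) := by
        rw [sub_div]
      rw [hsub]
      have : x * (τ + Real.log (1 + η/w)) ^ (-α) * (-(η^2*β/(w*(w+η))))
          = -(x * (τ + Real.log (1 + η/w)) ^ (-α) * (η^2*β/(w*(w+η)))) := by ring
      rw [this]
      linarith
  exact hAnti.quasiconvexOn (convex_Ici 1)
end

section
/- Let τ, η, β be real numbers with η > 0, 0 < τ < 1, and β ≥ 1/τ + 1/η. Then the function f₁ is quasiconvex on the interval [1, ∞). -/
open Real Filter

/-- `u/(1+u) ≤ log(1+u)` for `u ≥ 0`. -/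
lemma lemC {u : ℝ} (hu : 0 ≤ u) : u / (1 + u) ≤ Real.log (1 + u) := by
  have h1 : (0:ℝ) < 1 + u := by linarith
  have h := Real.log_le_sub_one_of_pos (x := (1+u)⁻¹) (by positivity)
  rw [Real.log_inv] at h
  have : (1+u)⁻¹ - 1 = -(u/(1+u)) := by field_simp; ring
  rw [this] at h
  linarith

/-- Padé bound: `log(1+a) ≤ a(a+2)/(2(a+1))` for `a ≥ 0`. -/
lemma lemB {a : ℝ} (ha : 0 ≤ a) : Real.log (1 + a) ≤ a * (a + 2) / (2 * (a + 1)) := by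
  set g : ℝ → ℝ := fun a => a * (a + 2) / (2 * (a + 1)) - Real.log (1 + a) with hg
  have key : MonotoneOn g (Set.Ici 0) := by
    apply monotoneOn_of_hasDerivWithinAt_nonneg (f' := fun a =>
        ((a + 2 + a) * (2 * (a + 1)) - a * (a + 2) * 2) / (2 * (a + 1)) ^ 2 - 1 / (1 + a))
        (convex_Ici 0)
    · -- continuity
      apply ContinuousOn.sub
      · apply ContinuousOn.div (by fun_prop) (by fun_prop)
        intro x hx
        have : (0:ℝ) ≤ x := hx
        positivity
      · apply ContinuousOn.log (by fun_prop)
        intro x hx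
        have : (0:ℝ) ≤ x := hx
        nlinarith
    · intro x hx
      simp only [interior_Ici] at hx ⊢
      have hx0 : (0:ℝ) < x := hx
      have h1 : (0:ℝ) < 1 + x := by linarith
      have h2 : (2:ℝ) * (x + 1) ≠ 0 := by positivity
      have d1 : HasDerivAt (fun a : ℝ => a * (a + 2) / (2 * (a + 1)))
          (((1 * (x + 2) + x * 1) * (2 * (x + 1)) - x * (x + 2) * (2 * 1)) / (2 * (x + 1)) ^ 2) x := by
        exact ((hasDerivAt_id x).mul ((hasDerivAt_id x).add_const 2)).div
          (((hasDerivAt_id x).add_const 1).const_mul 2) h2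
      have d2 : HasDerivAt (fun a : ℝ => Real.log (1 + a)) (1 / (1 + x)) x := by
        have := ((hasDerivAt_id x).const_add 1).log h1.ne'
        simpa using this
      have h3 := (d1.sub d2).hasDerivWithinAt (s := Set.Ioi (0:ℝ))
      exact h3.congr_deriv (by beta_reduce; ring)
    · intro x hx
      simp only [interior_Ici] at hx ⊢
      have hx0 : (0:ℝ) < x := hx
      rw [sub_nonneg, div_le_div_iff₀ (by positivity) (by positivity)]
      nlinarith [sq_nonneg x, sq_nonneg (x+1)]
  have h0 : (0:ℝ) ∈ Set.Ici (0:ℝ) := Set.self_mem_Ici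
  have := key h0 ha ha
  simp [hg] at this
  linarith [this]

/-- `2 log(1+u) + log(1+u)² ≤ 2u` for `u ≥ 0`. -/
lemma lemA_s5 {u : ℝ} (hu : 0 ≤ u) :
    2 * Real.log (1 + u) + (Real.log (1 + u)) ^ 2 ≤ 2 * u := by
  set g : ℝ → ℝ := fun u => 2 * u - 2 * Real.log (1 + u) - (Real.log (1 + u)) ^ 2 with hg
  have key : MonotoneOn g (Set.Ici 0) := by
    apply monotoneOn_of_hasDerivWithinAt_nonneg (f' := fun u =>
        2 - 2 * (1 / (1 + u)) - 2 * Real.log (1 + u) * (1 / (1 + u)))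
        (convex_Ici 0)
    · apply ContinuousOn.sub
      · apply ContinuousOn.sub (by fun_prop)
        apply ContinuousOn.mul continuousOn_const
        apply ContinuousOn.log (by fun_prop)
        intro x hx
        have : (0:ℝ) ≤ x := hx
        nlinarith
      · apply ContinuousOn.pow
        apply ContinuousOn.log (by fun_prop)
        intro x hx
        have : (0:ℝ) ≤ x := hx
        nlinarith
    · intro x hx
      simp only [interior_Ici] at hx ⊢
      have hx0 : (0:ℝ) < x := hx
      have h1 : (0:ℝ) < 1 + x := by linarith
      have dlog : HasDerivAt (fun u : ℝ => Real.log (1 + u)) (1 / (1 + x)) x := by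
        have := ((hasDerivAt_id x).const_add 1).log h1.ne'
        simpa using this
      have d1 : HasDerivAt (fun u : ℝ => 2 * u) 2 x := by
        simpa using (hasDerivAt_id x).const_mul 2
      have d2 := (d1.sub (dlog.const_mul 2)).sub (dlog.pow 2)
      have h3 := d2.hasDerivWithinAt (s := Set.Ioi (0:ℝ))
      exact h3.congr_deriv (by beta_reduce; ring)
    · intro x hx
      simp only [interior_Ici] at hx ⊢
      have hx0 : (0:ℝ) < x := hx
      have h1 : (0:ℝ) < 1 + x := by linarith
      have hlog : Real.log (1 + x) ≤ x := by
        have := Real.log_le_sub_one_of_pos h1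
        linarith
      have hlog0 : 0 ≤ Real.log (1 + x) := Real.log_nonneg (by linarith)
      have h2 : 2 * (1 / (1 + x)) + 2 * Real.log (1 + x) * (1 / (1 + x))
          = (2 + 2 * Real.log (1 + x)) / (1 + x) := by ring
      have h3 : (2 + 2 * Real.log (1 + x)) / (1 + x) ≤ 2 := by
        rw [div_le_iff₀ h1]
        linarith
      linarith
  have h0 : (0:ℝ) ∈ Set.Ici (0:ℝ) := Set.self_mem_Ici
  have := key h0 hu hu
  simp [hg] at this
  linarith [this]

lemma core {τ u : ℝ} (hτ0 : 0 < τ) (hτ1 : τ < 1) (hu : 0 < u) :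
    Real.log (1 + u) * (Real.log (1 + u) + 2 * τ) * (1 + u) ≤ 2 * u * (τ + u) := by
  have hA := lemA_s5 hu.le
  have hC := lemC hu.le
  have h1 : (0:ℝ) < 1 + u := by linarith
  have hC' : u ≤ (1 + u) * Real.log (1 + u) := by
    rw [div_le_iff₀ h1] at hC
    linarith [hC]
  nlinarith [mul_le_mul_of_nonneg_left hA h1.le,
    mul_nonneg (by linarith : (0:ℝ) ≤ 1 - τ)
      (by linarith : (0:ℝ) ≤ (1 + u) * Real.log (1 + u) - u)]

/-- for 0 < τ < 1, η > 0 and β ≥ 1/τ + 1/η,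
the function f₁ is quasiconvex on [1, ∞). -/
theorem stmt_5 (τ η β : ℝ) (hη : 0 < η) (hτ0 : 0 < τ) (hτ1 : τ < 1)
    (hβ : β ≥ 1 / τ + 1 / η) :
    QuasiconvexOn ℝ (Set.Ici (1 : ℝ)) (f₁ τ η β) := by
  have hβ0 : 0 < β := lt_of_lt_of_le (by positivity) hβ
  -- the derivative formula
  set F : ℝ → ℝ := fun x =>
    Real.log (τ + Real.log (1 + η / ((x - 1) * η * β + 1))) - Real.log τ
      + x * ((-(η * (η * β)) / ((x - 1) * η * β + 1) ^ 2
          / (1 + η / ((x - 1) * η * β + 1)))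
        / (τ + Real.log (1 + η / ((x - 1) * η * β + 1)))) with hF
  have key : ∀ x : ℝ, 1 ≤ x → HasDerivAt (f₁ τ η β) (F x) x ∧ F x ≤ 0 := by
    intro x hx
    set D : ℝ := (x - 1) * η * β + 1 with hDdef
    have hD1 : 1 ≤ D := by
      have : 0 ≤ (x - 1) * η * β := mul_nonneg (mul_nonneg (by linarith) hη.le) hβ0.le
      simp only [hDdef]; linarith
    have hD0 : (0:ℝ) < D := by linarith
    set u : ℝ := η / D with hudef
    have hu0 : 0 < u := by positivity
    have hud : u * D = η := div_mul_cancel₀ η hD0.ne'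
    have h1u : (0:ℝ) < 1 + u := by linarith
    set L : ℝ := Real.log (1 + u) with hLdef
    have hL0 : 0 < L := Real.log_pos (by linarith)
    have hτL : 0 < τ + L := by linarith
    constructor
    · -- derivative computation
      have hDder : HasDerivAt (fun y : ℝ => (y - 1) * η * β + 1) (η * β) x := by
        have := ((((hasDerivAt_id x).sub_const 1).mul_const η).mul_const β).add_const 1
        simpa using this
      have hquot : HasDerivAt (fun y : ℝ => η / ((y - 1) * η * β + 1))
          (-(η * (η * β)) / D ^ 2) x := by
        have := (hasDerivAt_const x η).div hDder hD0.ne'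
        simpa [hDdef, Pi.div_def] using this
      have hinner : HasDerivAt (fun y : ℝ => 1 + η / ((y - 1) * η * β + 1))
          (-(η * (η * β)) / D ^ 2) x := hquot.const_add 1
      have hlog1 : HasDerivAt (fun y : ℝ => Real.log (1 + η / ((y - 1) * η * β + 1)))
          (-(η * (η * β)) / D ^ 2 / (1 + u)) x := by
        have := hinner.log (by simp only [← hDdef, ← hudef]; exact h1u.ne')
        simpa [← hDdef, ← hudef] using this
      have hlog2 : HasDerivAt (fun y : ℝ => Real.log (τ + Real.log (1 + η / ((y - 1) * η * β + 1))))
          ((-(η * (η * β)) / D ^ 2 / (1 + u)) / (τ + L)) x := by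
        have := (hlog1.const_add τ).log (by simp only [← hDdef, ← hudef, ← hLdef]; exact hτL.ne')
        simpa [← hDdef, ← hudef, ← hLdef] using this
      have hmul := (hasDerivAt_id x).mul hlog2
      have hsub := hmul.sub (((hasDerivAt_id x).sub_const 1).mul_const (Real.log τ))
      have : HasDerivAt (f₁ τ η β)
          (1 * Real.log (τ + Real.log (1 + η / ((x - 1) * η * β + 1)))
            + x * ((-(η * (η * β)) / D ^ 2 / (1 + u)) / (τ + L)) - 1 * Real.log τ) x := hsub
      convert this using 1
      simp only [hF, ← hDdef, ← hudef, ← hLdef]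
      ring
    · -- sign of the derivative
      have hstep1 : Real.log (τ + L) - Real.log τ ≤ L * (L + 2 * τ) / (2 * τ * (L + τ)) := by
        have e1 : Real.log (τ + L) - Real.log τ = Real.log (1 + L / τ) := by
          rw [← Real.log_div hτL.ne' hτ0.ne']
          congr 1
          field_simp
        rw [e1]
        have := lemB (a := L / τ) (by positivity)
        refine this.trans (le_of_eq ?_)
        field_simp
      have hβη2 : η + τ ≤ τ * (η * β) := by
        have h0 : (0:ℝ) < τ * η := by positivity
        have e : (1 / τ + 1 / η) * (τ * η) = η + τ := by field_simp
        nlinarith [mul_le_mul_of_nonneg_right hβ h0.le]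
      have hxb : x * (η * β) = D - 1 + η * β := by simp only [hDdef]; ring
      have hcore := core hτ0 hτ1 hu0
      have h6 : L * (L + 2 * τ) * (D * (D + η)) ≤ 2 * η * (τ * D + η) := by
        have c1 : L * (L + 2 * τ) * (D * (D + u * D)) ≤ 2 * (u * D) * (τ * D + u * D) := by
          calc L * (L + 2 * τ) * (D * (D + u * D))
              = (L * (L + 2 * τ) * (1 + u)) * D ^ 2 := by ring
            _ ≤ (2 * u * (τ + u)) * D ^ 2 :=
                mul_le_mul_of_nonneg_right hcore (by positivity)
            _ = 2 * (u * D) * (τ * D + u * D) := by ring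
        rwa [hud] at c1
      have h5 : 2 * η * (τ * D + η) ≤ 2 * τ * (x * (η * (η * β))) := by
        have e2 : x * (η * (η * β)) = η * (x * (η * β)) := by ring
        rw [e2, hxb]
        nlinarith [mul_nonneg hη.le (by linarith : (0:ℝ) ≤ τ * (η * β) - η - τ)]
      have h4 := h6.trans h5
      have h3 : L * (L + 2 * τ) / (2 * τ * (L + τ)) ≤
          x * (η * (η * β)) / (D * (D + η) * (τ + L)) := by
        rw [div_le_div_iff₀ (by positivity) (by positivity)]
        calc L * (L + 2 * τ) * (D * (D + η) * (τ + L))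
            = (L * (L + 2 * τ) * (D * (D + η))) * (τ + L) := by ring
          _ ≤ (2 * τ * (x * (η * (η * β)))) * (τ + L) :=
              mul_le_mul_of_nonneg_right h4 hτL.le
          _ = x * (η * (η * β)) * (2 * τ * (L + τ)) := by ring
      have hmain := hstep1.trans h3
      have hrw : x * ((-(η * (η * β)) / D ^ 2 / (1 + u)) / (τ + L))
          = -(x * (η * (η * β)) / (D * (D + η) * (τ + L))) := by
        have hDη : (0:ℝ) < D + η := by linarith
        rw [hudef]
        field_simp
        try ring
      have : F x = (Real.log (τ + L) - Real.log τ)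
          + x * ((-(η * (η * β)) / D ^ 2 / (1 + u)) / (τ + L)) := by
        simp only [hF, ← hDdef, ← hudef, ← hLdef]
        try ring
      rw [this, hrw]
      linarith [hmain]
  -- conclude
  apply AntitoneOn.quasiconvexOn _ (convex_Ici 1)
  apply antitoneOn_of_hasDerivWithinAt_nonpos (convex_Ici 1) (f' := F)
  · intro x hx
    exact ((key x hx).1).continuousAt.continuousWithinAt
  · intro x hx
    rw [interior_Ici] at hx
    exact ((key x hx.le).1).hasDerivWithinAt
  · intro x hx
    rw [interior_Ici] at hx
    exact (key x hx.le).2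
end

section
/- Let α, τ, η, β be real numbers with α ∈ (0,2), α ≠ 1, η > 0, 0 < τ < α, and β ≥ α/τ + 1/η. Then for every real y ≥ 1/η at which the first derivative of g vanishes (deriv g y = 0), the second derivative of g is strictly positive (deriv (deriv g) y > 0). -/
open Real Filter

/-- The function `g` from the paper (change of variables `y = (x−1)β + 1/η`):
`g(y) = (y/β + 1 − 1/(ηβ))·(τ + log(1 + 1/y))^(1−α)/(1−α) − (y/β − 1/(ηβ))·τ^(1−α)/(1−α)`. -/
noncomputable def g (α τ η β : ℝ) : ℝ → ℝ := fun y =>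
  (y / β + 1 - 1 / (η * β)) * (τ + Real.log (1 + 1 / y)) ^ (1 - α) / (1 - α)
    - (y / β - 1 / (η * β)) * τ ^ (1 - α) / (1 - α)

/-- Padé-type lower bound for the logarithm: `log x > 2(x−1)/(x+1)` for `x > 1`. -/
lemma log_gt_pade (x : ℝ) (hx : 1 < x) : 2*(x-1)/(x+1) < Real.log x := by
  have key : StrictMonoOn (fun t => Real.log t - 2*(t-1)/(t+1)) (Set.Ici 1) := by
    apply strictMonoOn_of_deriv_pos (convex_Ici 1)
    · apply ContinuousOn.sub
      · exact Real.continuousOn_log.mono (fun z hz => by simp at hz ⊢; linarith)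
      · apply ContinuousOn.div
        · fun_prop
        · fun_prop
        · intro z hz; simp at hz; intro h; linarith
    · intro z hz
      simp only [interior_Ici, Set.mem_Ioi] at hz
      have hz0 : (0:ℝ) < z := by linarith
      have hz1 : z + 1 ≠ 0 := by linarith
      have hd : HasDerivAt (fun t => Real.log t - 2*(t-1)/(t+1)) (1/z - 4/(z+1)^2) z := by
        have h1 : HasDerivAt Real.log (1/z) z := by
          simpa using Real.hasDerivAt_log (ne_of_gt hz0)
        have h2 : HasDerivAt (fun t : ℝ => 2*(t-1)/(t+1)) (4/(z+1)^2) z := by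
          have ha : HasDerivAt (fun t : ℝ => 2*(t-1)) 2 z := by
            simpa using ((hasDerivAt_id z).sub_const 1).const_mul 2
          have hb : HasDerivAt (fun t : ℝ => t+1) 1 z := (hasDerivAt_id z).add_const 1
          have := ha.div hb hz1
          exact this.congr_deriv (by ring)
        exact h1.sub h2
      rw [hd.deriv]
      have hzz : (z+1)^2 > 0 := by positivity
      rw [sub_pos, div_lt_div_iff₀ hzz hz0]
      nlinarith [sq_nonneg (z-1)]
  have := key (Set.mem_Ici.2 le_rfl) (Set.mem_Ici.2 hx.le) hx
  simpa using this

lemma pos_of_mul_pos' {a b : ℝ} (h : 0 < a * b) (ha : 0 < a) : 0 < b := by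
  by_contra h'
  push_neg at h'
  nlinarith

/-- The key algebraic inequality. -/
lemma key_ineq_s6 (α τ y b u : ℝ) (hα2 : α < 2) (hτ0 : 0 < τ) (hτα : τ < α)
    (hy : 0 < y) (hb : α ≤ τ * b) (hu : 2 < u * (2*y+1)) :
    0 < (τ + u) * ((y + b)*(2*y+1) - 2*(y^2+y)) - α*(y+b) := by
  have hc1 : 0 < (τ+u)*(2*y+1) - α := by nlinarith
  have hbb : 0 ≤ (τ*b - α) * ((τ+u)*(2*y+1) - α) :=
    mul_nonneg (by linarith) hc1.le
  have hcoef : 0 < α*(2*y+1) - τ*y := by nlinarith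
  have hQu : 0 ≤ (u*(2*y+1) - 2) * (α*(2*y+1) - τ*y) :=
    mul_nonneg (by linarith) hcoef.le
  have hC : 0 < 4*α - 2*τ + 3*α*τ - 2*α^2 - τ^2 := by
    nlinarith [mul_pos (sub_pos.2 hτα) (sub_pos.2 hα2), mul_pos hτ0 (sub_pos.2 hτα)]
  have h2y : (0:ℝ) < 2*y+1 := by linarith
  have hE : 0 < α*((τ+u)*(2*y+1)) - α^2 - τ^2*y - τ*u*y - α*τ*y := by
    have h3 : 0 < (2*y+1) * (α*((τ+u)*(2*y+1)) - α^2 - τ^2*y - τ*u*y - α*τ*y) := by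
      nlinarith [hQu, mul_pos (mul_pos (mul_pos hτ0 (sub_pos.2 hτα)) hy) hy, mul_pos hC hy]
    exact pos_of_mul_pos' h3 h2y
  have h4 : 0 < τ * ((τ + u) * ((y + b)*(2*y+1) - 2*(y^2+y)) - α*(y+b)) := by nlinarith
  exact pos_of_mul_pos' h4 hτ0

noncomputable def Lf (τ : ℝ) : ℝ → ℝ := fun y => τ + Real.log (1 + 1 / y)

lemma Lf_pos (τ : ℝ) (hτ : 0 < τ) (y : ℝ) (hy : 0 < y) : 0 < Lf τ y := by
  have : 0 < Real.log (1 + 1/y) := Real.log_pos (by simp; positivity)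
  unfold Lf; linarith

lemma hasDerivAt_Lf (τ y : ℝ) (hy : 0 < y) : HasDerivAt (Lf τ) (-(y^2+y)⁻¹) y := by
  have hy0 : y ≠ 0 := ne_of_gt hy
  have hf : HasDerivAt (fun t : ℝ => 1 + 1/t) (-(y^2)⁻¹) y := by
    simpa using (hasDerivAt_inv hy0).const_add 1
  have hne : 1 + 1/y ≠ 0 := by positivity
  have := hf.log hne
  exact (this.const_add τ).congr_deriv (by rw [neg_div, div_eq_mul_inv, ← mul_inv, mul_add, mul_one, sq, mul_assoc, mul_one_div_cancel hy0, mul_one])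

/-- Explicit first derivative of `g`. -/
noncomputable def g1 (α τ η β : ℝ) : ℝ → ℝ := fun y =>
  β⁻¹ * (Lf τ y)^(1-α)/(1-α) + (y/β + 1 - 1/(η*β)) * (Lf τ y)^(-α) * (-(y^2+y)⁻¹)
    - β⁻¹ * τ^(1-α)/(1-α)

lemma hasDerivAt_g_s6 (α τ η β : ℝ) (hτ : 0 < τ) (hα1 : α ≠ 1) (y : ℝ) (hy : 0 < y) :
    HasDerivAt (g α τ η β) (g1 α τ η β y) y := by
  have hL := hasDerivAt_Lf τ y hy
  have hLpos := Lf_pos τ hτ y hy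
  have hA : HasDerivAt (fun t : ℝ => t/β + 1 - 1/(η*β)) β⁻¹ y := by
    simpa using (((hasDerivAt_id y).div_const β).add_const 1).sub_const (1/(η*β))
  have hpow : HasDerivAt (fun t => (Lf τ t)^(1-α)) ((1-α) * (Lf τ y)^(-α) * (-(y^2+y)⁻¹)) y := by
    have := hL.rpow_const (p := 1-α) (Or.inl (ne_of_gt hLpos))
    have he : (1:ℝ) - α - 1 = -α := by ring
    rw [he] at this
    convert this using 1
    ring
  have hB : HasDerivAt (fun t : ℝ => t/β - 1/(η*β)) β⁻¹ y := by
    simpa using ((hasDerivAt_id y).div_const β).sub_const (1/(η*β))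
  have hmain : HasDerivAt (fun t => (t/β + 1 - 1/(η*β)) * (Lf τ t)^(1-α) / (1-α)
      - (t/β - 1/(η*β)) * τ^(1-α) / (1-α))
      ((β⁻¹ * (Lf τ y)^(1-α) + (y/β + 1 - 1/(η*β)) * ((1-α) * (Lf τ y)^(-α) * (-(y^2+y)⁻¹)))/(1-α)
        - β⁻¹ * τ^(1-α)/(1-α)) y := by
    exact ((hA.mul hpow).div_const (1-α)).sub ((hB.mul_const (τ^(1-α))).div_const (1-α))
  have hg : g α τ η β = fun t => (t/β + 1 - 1/(η*β)) * (Lf τ t)^(1-α) / (1-α)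
      - (t/β - 1/(η*β)) * τ^(1-α) / (1-α) := rfl
  rw [hg]
  convert hmain using 1
  unfold g1
  have h1α : (1:ℝ) - α ≠ 0 := sub_ne_zero.2 (Ne.symm hα1)
  have hmid : ∀ A x w : ℝ, A * ((1-α)*x*w)/(1-α) = A*x*w := fun A x w => by
    field_simp
  rw [add_div, hmid]

/-- Explicit second derivative of `g`. -/
noncomputable def g2 (α τ η β : ℝ) : ℝ → ℝ := fun y =>
  (Lf τ y)^(-α) * ((Lf τ y) * ((y + β - 1/η)*(2*y+1) - 2*(y^2+y)) - α*(y + β - 1/η))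
    / (β * (Lf τ y) * (y^2+y)^2)

lemma hasDerivAt_g1 (α τ η β : ℝ) (hτ : 0 < τ) (hα1 : α ≠ 1) (hβ : 0 < β) (hη : 0 < η)
    (y : ℝ) (hy : 0 < y) : HasDerivAt (g1 α τ η β) (g2 α τ η β y) y := by
  have hL := hasDerivAt_Lf τ y hy
  have hLpos := Lf_pos τ hτ y hy
  have hLne := ne_of_gt hLpos
  have hyy : (0:ℝ) < y^2 + y := by positivity
  have hyyne : y^2 + y ≠ 0 := ne_of_gt hyy
  have h1α : (1:ℝ) - α ≠ 0 := sub_ne_zero.2 (Ne.symm hα1)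
  have hA : HasDerivAt (fun t : ℝ => t/β + 1 - 1/(η*β)) β⁻¹ y := by
    simpa using (((hasDerivAt_id y).div_const β).add_const 1).sub_const (1/(η*β))
  have hpow1 : HasDerivAt (fun t => (Lf τ t)^(1-α)) ((1-α) * (Lf τ y)^(-α) * (-(y^2+y)⁻¹)) y := by
    have := hL.rpow_const (p := 1-α) (Or.inl hLne)
    have he : (1:ℝ) - α - 1 = -α := by ring
    rw [he] at this
    convert this using 1
    ring
  have hX : HasDerivAt (fun t => (Lf τ t)^(-α)) ((-α) * (Lf τ y)^(-α-1) * (-(y^2+y)⁻¹)) y := by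
    have := hL.rpow_const (p := -α) (Or.inl hLne)
    convert this using 1
    ring
  have hW : HasDerivAt (fun t : ℝ => -(t^2+t)⁻¹) ((2*y+1) / (y^2+y)^2) y := by
    have hin : HasDerivAt (fun t : ℝ => t^2 + t) (2*y+1) y := by
      exact ((hasDerivAt_pow 2 y).add (hasDerivAt_id' y)).congr_deriv (by norm_num)
    have := (hin.inv hyyne).neg
    exact this.congr_deriv (by ring)
  have hD : HasDerivAt (g1 α τ η β)
      (β⁻¹ * ((1-α) * (Lf τ y)^(-α) * (-(y^2+y)⁻¹)) / (1-α)
        + ((β⁻¹ * (Lf τ y)^(-α) + (y/β + 1 - 1/(η*β)) * ((-α) * (Lf τ y)^(-α-1) * (-(y^2+y)⁻¹))) * (-(y^2+y)⁻¹)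
            + (y/β + 1 - 1/(η*β)) * (Lf τ y)^(-α) * ((2*y+1) / (y^2+y)^2))) y := by
    have t1 := (hpow1.const_mul β⁻¹).div_const (1-α)
    have t2 := (hA.mul hX).mul hW
    have t3 : HasDerivAt (fun _ : ℝ => β⁻¹ * τ^(1-α)/(1-α)) 0 y := hasDerivAt_const y _
    have := (t1.add t2).sub t3
    rw [sub_zero] at this; exact this
  convert hD using 1
  unfold g2
  have hsplit : (Lf τ y)^(-α-1) = (Lf τ y)^(-α) / Lf τ y := by
    rw [Real.rpow_sub hLpos, Real.rpow_one]
  rw [hsplit]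
  have hmid : ∀ x w : ℝ, β⁻¹ * ((1-α)*x*w)/(1-α) = β⁻¹*x*w := fun x w => by
    field_simp
  rw [hmid]
  field_simp
  ring

/-- for α ∈ (0,2), α ≠ 1, 0 < τ < α and β ≥ α/τ + 1/η,
at every y ≥ 1/η where g′(y) = 0 we have g″(y) > 0. -/
theorem stmt_6 (α τ η β : ℝ) (hα0 : 0 < α) (hα2 : α < 2) (hα1 : α ≠ 1)
    (hη : 0 < η) (hτ0 : 0 < τ) (hτα : τ < α)
    (hβ : β ≥ α / τ + 1 / η) :
    ∀ y : ℝ, 1 / η ≤ y → deriv (g α τ η β) y = 0 →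
      0 < deriv (deriv (g α τ η β)) y := by
  intro y hy _
  have hy0 : 0 < y := lt_of_lt_of_le (by positivity) hy
  have hβ0 : 0 < β := lt_of_lt_of_le (by positivity) hβ
  -- deriv g = g1 near y
  have hev : deriv (g α τ η β) =ᶠ[nhds y] g1 α τ η β := by
    filter_upwards [Ioi_mem_nhds hy0] with z hz
    exact (hasDerivAt_g_s6 α τ η β hτ0 hα1 z hz).deriv
  have h2 : deriv (deriv (g α τ η β)) y = g2 α τ η β y := by
    rw [hev.deriv_eq]
    exact (hasDerivAt_g1 α τ η β hτ0 hα1 hβ0 hη y hy0).deriv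
  rw [h2]
  -- positivity of g2
  have hLpos := Lf_pos τ hτ0 y hy0
  have hXpos : 0 < (Lf τ y)^(-α) := Real.rpow_pos_of_pos hLpos _
  have hu : 2 < Real.log (1 + 1/y) * (2*y+1) := by
    have h2y : (0:ℝ) < 2*y+1 := by linarith
    have := log_gt_pade (1 + 1/y) (by simp; positivity)
    have heq : 2*((1+1/y)-1)/((1+1/y)+1) = 2/(2*y+1) := by
      rw [div_eq_div_iff (by positivity) (by positivity)]
      field_simp
      ring
    rw [heq, div_lt_iff₀ h2y] at this
    linarith
  have hb : α ≤ τ * (β - 1/η) := by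
    have h1 : α/τ ≤ β - 1/η := by linarith
    have := mul_le_mul_of_nonneg_left h1 hτ0.le
    rwa [mul_div_cancel₀ _ (ne_of_gt hτ0)] at this
  have hkey := key_ineq_s6 α τ y (β - 1/η) (Real.log (1 + 1/y)) hα2 hτ0 hτα hy0 hb hu
  have hbr : 0 < (Lf τ y) * ((y + β - 1/η)*(2*y+1) - 2*(y^2+y)) - α*(y + β - 1/η) := by
    have hLf : Lf τ y = τ + Real.log (1 + 1/y) := rfl
    rw [hLf]
    nlinarith [hkey]
  unfold g2
  exact div_pos (mul_pos hXpos hbr) (by positivity)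
end

section
/- Let α, τ, η, β be real numbers with α ≥ 0, α ≠ 1, τ > 0, η > 0, β > 0. Then f(x) tends to τ^(−α)·(1 + β·τ − α)/(β·(1−α)) as x tends to +∞, i.e. Tendsto f atTop (nhds (τ^(−α)·(1 + β·τ − α)/(β·(1−α)))). -/
open Real Filter
open scoped Topology

/-- the limit of f at +∞ is τ^(−α)·(1 + βτ − α)/(β(1−α)). -/
theorem stmt_9 (α τ η β : ℝ) (hα0 : 0 ≤ α) (hα1 : α ≠ 1)
    (hτ : 0 < τ) (hη : 0 < η) (hβ : 0 < β) :
    Filter.Tendsto (f α τ η β) Filter.atTop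
      (nhds (τ ^ (-α) * (1 + β * τ - α) / (β * (1 - α)))) := by
  have h1α : (1:ℝ) - α ≠ 0 := sub_ne_zero.mpr (Ne.symm hα1)
  set D : ℝ → ℝ := fun x => (x - 1) * η * β + 1 with hDdef
  set u : ℝ → ℝ := fun x => η / D x with hudef
  set g : ℝ → ℝ := fun x => Real.log (1 + u x) with hgdef
  have hD : Tendsto D atTop atTop := by
    have h : Tendsto (fun x : ℝ => (x + (-1)) * (η * β) + 1) atTop atTop :=
      tendsto_atTop_add_const_right _ 1
        ((tendsto_atTop_add_const_right _ (-1) tendsto_id).atTop_mul_const (by positivity))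
    have : Tendsto (fun x : ℝ => (x - 1) * η * β + 1) atTop atTop := by
      refine h.congr fun x => ?_
      ring
    simpa [hDdef] using this
  have hDpos : ∀ᶠ x in atTop, 0 < D x := hD.eventually_gt_atTop 0
  have hupos : ∀ᶠ x in atTop, 0 < u x := hDpos.mono fun x hx => div_pos hη hx
  have hu0 : Tendsto u atTop (𝓝 0) := tendsto_const_nhds.div_atTop hD
  -- x * u x → η / (η*β)
  have hDx : Tendsto (fun x => D x / x) atTop (𝓝 (η * β)) := by
    have h := tendsto_inv_atTop_zero.const_mul (1 - η * β)
    have h2 : Tendsto (fun x : ℝ => η * β + (1 - η * β) * x⁻¹) atTop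
        (𝓝 (η * β + (1 - η * β) * 0)) := tendsto_const_nhds.add h
    rw [mul_zero, add_zero] at h2
    refine h2.congr' ?_
    filter_upwards [eventually_ne_atTop (0:ℝ)] with x hx
    simp only [hDdef]
    field_simp
    ring
  have hxu : Tendsto (fun x => x * u x) atTop (𝓝 (η / (η * β))) := by
    have h := (tendsto_const_nhds (x := η) (f := atTop)).div hDx (by positivity : (η*β) ≠ 0)
    refine h.congr' ?_
    filter_upwards [hDpos, eventually_gt_atTop (0:ℝ)] with x hDx0 hx0
    simp only [Pi.div_apply, hudef]
    rw [div_div_eq_mul_div]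
    field_simp
  have hg0 : Tendsto g atTop (𝓝 0) := by
    have h1 : Tendsto (fun x => 1 + u x) atTop (𝓝 1) := by
      simpa using tendsto_const_nhds.add hu0
    have h2 := ((Real.continuousAt_log one_ne_zero).tendsto).comp h1
    simpa [hgdef, Function.comp_def] using h2
  have hgpos : ∀ᶠ x in atTop, 0 < g x :=
    hupos.mono fun x hx => Real.log_pos (by linarith)
  -- slope of log at 0
  have hlog : HasDerivAt (fun y : ℝ => Real.log (1 + y)) 1 0 := by
    have h1 : HasDerivAt (fun y : ℝ => 1 + y) 1 0 := (hasDerivAt_id 0).const_add 1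
    have h2 := (Real.hasDerivAt_log (by norm_num : (1:ℝ) + 0 ≠ 0)).comp 0 h1
    simpa [Function.comp_def] using h2
  have huwithin : Tendsto u atTop (𝓝[≠] (0:ℝ)) :=
    tendsto_nhdsWithin_iff.mpr ⟨hu0, hupos.mono fun x hx => ne_of_gt hx⟩
  have hL2 : Tendsto (fun x => Real.log (1 + u x) / u x) atTop (𝓝 1) := by
    have h := (hasDerivAt_iff_tendsto_slope.mp hlog).comp huwithin
    refine h.congr fun x => ?_
    simp [Function.comp, slope_def_field]
  -- slope of rpow at τ
  have hrpow : HasDerivAt (fun y : ℝ => y ^ (1 - α)) ((1 - α) * τ ^ (-α)) τ := by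
    have h := Real.hasDerivAt_rpow_const (x := τ) (p := 1 - α) (Or.inl hτ.ne')
    simpa [show (1:ℝ) - α - 1 = -α by ring] using h
  have hτwithin : Tendsto (fun x => τ + g x) atTop (𝓝[≠] τ) := by
    refine tendsto_nhdsWithin_iff.mpr ⟨?_, hgpos.mono fun x hx => ?_⟩
    · simpa using tendsto_const_nhds.add hg0
    · simp only [Set.mem_compl_iff, Set.mem_singleton_iff]
      intro h
      nlinarith
  have hL1 : Tendsto (fun x => ((τ + g x) ^ (1 - α) - τ ^ (1 - α)) / g x) atTop
      (𝓝 ((1 - α) * τ ^ (-α))) := by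
    have h := (hasDerivAt_iff_tendsto_slope.mp hrpow).comp hτwithin
    refine h.congr fun x => ?_
    simp [Function.comp, slope_def_field, add_sub_cancel_left]
  have hprod : Tendsto (fun x => (((τ + g x) ^ (1 - α) - τ ^ (1 - α)) / g x) *
      (Real.log (1 + u x) / u x) * (x * u x)) atTop
      (𝓝 ((1 - α) * τ ^ (-α) * 1 * (η / (η * β)))) := (hL1.mul hL2).mul hxu
  have hmain : Tendsto (fun x => x * ((τ + g x) ^ (1 - α) - τ ^ (1 - α))) atTop
      (𝓝 ((1 - α) * τ ^ (-α) * 1 * (η / (η * β)))) := by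
    refine hprod.congr' ?_
    filter_upwards [hupos, hgpos] with x hu hg
    have hg' : g x ≠ 0 := ne_of_gt hg
    have hu' : u x ≠ 0 := ne_of_gt hu
    have hlg : Real.log (1 + u x) = g x := rfl
    rw [hlg]
    field_simp
  have hf : Tendsto (f α τ η β) atTop
      (𝓝 ((1 - α) * τ ^ (-α) * 1 * (η / (η * β)) / (1 - α) + τ ^ (1 - α) / (1 - α))) := by
    have h := (hmain.div_const (1 - α)).add
      (tendsto_const_nhds (x := τ ^ (1 - α) / (1 - α)) (f := atTop))
    refine h.congr fun x => ?_
    simp only [f, hgdef, hudef, hDdef]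
    ring
  have hval : τ ^ (-α) * (1 + β * τ - α) / (β * (1 - α)) =
      (1 - α) * τ ^ (-α) * 1 * (η / (η * β)) / (1 - α) + τ ^ (1 - α) / (1 - α) := by
    have hτpow : τ ^ ((1:ℝ) - α) = τ * τ ^ (-α) := by
      rw [show (1:ℝ) - α = 1 + (-α) by ring, Real.rpow_add hτ, Real.rpow_one]
    rw [hτpow]
    field_simp
    ring
  rw [hval]
  exact hf
end

section
/- Let τ, η, β be real numbers with τ > 0, η > 0, β > 0. Then f₁(x) tends to 1/(β·τ) + log τ as x tends to +∞, i.e. Tendsto f₁ atTop (nhds (1/(β·τ) + log τ)). -/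
open Real Filter

/-- slope of `log` at `1` tends to `1`. -/
lemma log_slope_tendsto : Filter.Tendsto (fun y : ℝ => Real.log y / (y - 1))
    (nhdsWithin 1 {(1:ℝ)}ᶜ) (nhds 1) := by
  have h := hasDerivAt_iff_tendsto_slope.mp (Real.hasDerivAt_log one_ne_zero)
  simp only [inv_one] at h
  have heq : (slope Real.log 1) = fun y : ℝ => Real.log y / (y - 1) := by
    funext y
    simp [slope_def_field, Real.log_one]
  rwa [heq] at h

/-- the limit of f₁ at +∞ is 1/(βτ) + log τ. -/
theorem stmt_10 (τ η β : ℝ) (hτ : 0 < τ) (hη : 0 < η) (hβ : 0 < β) :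
    Filter.Tendsto (f₁ τ η β) Filter.atTop
      (nhds (1 / (β * τ) + Real.log τ)) := by
  set d : ℝ → ℝ := fun x => (x - 1) * η * β + 1 with hd
  set u : ℝ → ℝ := fun x => η / d x with hu
  set g : ℝ → ℝ := fun x => Real.log (1 + u x) with hg
  set w : ℝ → ℝ := fun x => g x / τ with hw
  have hev : ∀ᶠ x : ℝ in atTop, 1 < x := eventually_gt_atTop 1
  have hdpos : ∀ᶠ x : ℝ in atTop, 0 < d x := hev.mono fun x hx => by
    have h1 : 0 < x - 1 := by linarith
    have := mul_pos (mul_pos h1 hη) hβ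
    simp only [hd]; linarith
  have hupos : ∀ᶠ x : ℝ in atTop, 0 < u x := hdpos.mono fun x hx => div_pos hη hx
  have hgpos : ∀ᶠ x : ℝ in atTop, 0 < g x := hupos.mono fun x hx =>
    Real.log_pos (by linarith)
  have hwpos : ∀ᶠ x : ℝ in atTop, 0 < w x := hgpos.mono fun x hx => div_pos hx hτ
  -- d → ∞
  have hdtop : Tendsto d atTop atTop := by
    have h1 : Tendsto (fun x : ℝ => x - 1) atTop atTop := by
      simpa [sub_eq_add_neg] using tendsto_atTop_add_const_right atTop (-1) tendsto_id
    have h2 : Tendsto (fun x : ℝ => (x - 1) * (η * β)) atTop atTop :=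
      h1.atTop_mul_const (mul_pos hη hβ)
    have h3 := tendsto_atTop_add_const_right atTop 1 h2
    simpa [mul_assoc, hd] using h3
  -- u → 0
  have hu0 : Tendsto u atTop (nhds 0) := tendsto_const_nhds.div_atTop hdtop
  -- 1 + u → 1 within ≠ 1
  have h1u : Tendsto (fun x => 1 + u x) atTop (nhdsWithin 1 {(1:ℝ)}ᶜ) := by
    apply tendsto_nhdsWithin_of_tendsto_nhds_of_eventually_within
    · simpa using tendsto_const_nhds.add hu0
    · exact hupos.mono fun x hx => by
        simp only [Set.mem_compl_iff, Set.mem_singleton_iff]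
        intro h; nlinarith
  -- g/u → 1
  have hgu : Tendsto (fun x => g x / u x) atTop (nhds 1) := by
    have h := log_slope_tendsto.comp h1u
    have heq : (fun x => Real.log (1 + u x) / ((1 + u x) - 1)) = fun x => g x / u x := by
      funext x; simp [hg]
    simpa only [Function.comp_def, heq] using h
  -- x * u → 1/β
  have hxu : Tendsto (fun x => x * u x) atTop (nhds (1 / β)) := by
    have hinv : Tendsto (fun x : ℝ => 1 / x) atTop (nhds 0) := by
      simpa [one_div] using tendsto_inv_atTop_zero
    have hden : Tendsto (fun x : ℝ => (1 - 1/x) * (η*β) + 1/x) atTop (nhds (η*β)) := by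
      have h : Tendsto (fun x : ℝ => (1 - 1/x) * (η*β) + 1/x) atTop
          (nhds ((1 - 0) * (η*β) + 0)) :=
        (((tendsto_const_nhds (x := (1:ℝ))).sub hinv).mul_const (η*β)).add hinv
      simpa using h
    have hrhs : Tendsto (fun x : ℝ => η / ((1 - 1/x) * (η*β) + 1/x)) atTop
        (nhds (η/(η*β))) :=
      tendsto_const_nhds.div hden (ne_of_gt (mul_pos hη hβ))
    have heq : ∀ᶠ x : ℝ in atTop,
        η / ((1 - 1/x) * (η*β) + 1/x) = x * u x := by
      filter_upwards [hev, hdpos] with x hx hdx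
      have hx0 : x ≠ 0 := by linarith
      have hdx0 : d x ≠ 0 := ne_of_gt hdx
      have hne : (1 - 1/x) * (η*β) + 1/x ≠ 0 := by
        have hq : (1 - 1/x) * (η*β) + 1/x = d x / x := by
          field_simp [hd]; ring
        rw [hq]
        exact div_ne_zero hdx0 hx0
      have hdx0' : (x - 1) * η * β + 1 ≠ 0 := by simpa [hd] using hdx0
      simp only [hu]
      rw [eq_comm, eq_div_iff hne]
      simp only [hd]
      field_simp [hdx0']
      have hD : 1 + η * x * β - η * β ≠ 0 := by
        intro h; apply hdx0'; linear_combination h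
      calc _ = (1 + η * x * β - η * β) * (1 + η * x * β - η * β)⁻¹ := by ring
        _ = 1 := mul_inv_cancel₀ hD
    have hsimp : η / (η * β) = 1 / β := by field_simp
    exact hsimp ▸ (hrhs.congr' heq)
  -- x * g → 1/β
  have hxg : Tendsto (fun x => x * g x) atTop (nhds (1 / β)) := by
    have h := hxu.mul hgu
    rw [mul_one] at h
    apply h.congr'
    filter_upwards [hupos] with x hx
    rw [mul_div_assoc', mul_comm (x * u x), mul_div_assoc, mul_div_assoc,
      div_self (ne_of_gt hx), mul_one, mul_comm]
  -- x * w → 1/(βτ)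
  have hxw : Tendsto (fun x => x * w x) atTop (nhds (1 / (β * τ))) := by
    have h := hxg.div_const τ
    rw [div_div] at h
    apply h.congr
    intro x
    simp only [hw, mul_div_assoc]
  -- 1 + w → 1 within ≠ 1
  have h1w : Tendsto (fun x => 1 + w x) atTop (nhdsWithin 1 {(1:ℝ)}ᶜ) := by
    apply tendsto_nhdsWithin_of_tendsto_nhds_of_eventually_within
    · have hw0 : Tendsto w atTop (nhds 0) := by
        have hg0 : Tendsto g atTop (nhds 0) := by
          have := (Real.continuousAt_log one_ne_zero).tendsto.comp
            (by simpa using tendsto_const_nhds.add hu0 :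
              Tendsto (fun x => 1 + u x) atTop (nhds 1))
          simpa [Function.comp_def, Real.log_one, hg] using this
        simpa using hg0.div_const τ
      simpa using tendsto_const_nhds.add hw0
    · exact hwpos.mono fun x hx => by
        simp only [Set.mem_compl_iff, Set.mem_singleton_iff]
        intro h; nlinarith
  -- log(1+w)/w → 1
  have hlw : Tendsto (fun x => Real.log (1 + w x) / w x) atTop (nhds 1) := by
    have h := log_slope_tendsto.comp h1w
    have heq : (fun x => Real.log (1 + w x) / ((1 + w x) - 1))
        = fun x => Real.log (1 + w x) / w x := by
      funext x; ring_nf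
    simpa only [Function.comp_def, heq] using h
  -- x * log(1+w) → 1/(βτ)
  have hmain : Tendsto (fun x => x * Real.log (1 + w x)) atTop (nhds (1 / (β * τ))) := by
    have h := hxw.mul hlw
    rw [mul_one] at h
    apply h.congr'
    filter_upwards [hwpos] with x hx
    rw [mul_div_assoc', mul_comm (x * w x), mul_div_assoc, mul_div_assoc,
      div_self (ne_of_gt hx), mul_one, mul_comm]
  -- conclude
  have hfinal := hmain.add tendsto_const_nhds (b := Real.log τ)
  apply hfinal.congr'
  filter_upwards [hwpos, hgpos] with x hxw' hxg'
  have hτ0 : τ ≠ 0 := ne_of_gt hτ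
  have h1w0 : (1 : ℝ) + w x ≠ 0 := by nlinarith
  have hsplit : τ + g x = τ * (1 + w x) := by
    simp only [hw]
    field_simp
  have : Real.log (τ + g x) = Real.log τ + Real.log (1 + w x) := by
    rw [hsplit, Real.log_mul hτ0 h1w0]
  simp only [f₁, ← hd, ← hu, ← hg]
  rw [this]
  ring
end

section
/- Let α, τ, η, β be real numbers with α ≥ 0, α ≠ 1, τ > 0, η > 0, β > 0, and suppose β > (α−1)/(τ − τ^α·(τ + log(1+η))^(1−α)). Then τ^(−α)·(1 + β·τ − α)/(β·(1−α)) < (τ + log(1+η))^(1−α)/(1−α). (In other words, the limit of f at +∞ is strictly smaller than f(1).) -/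
open Real

/-- if β > (α−1)/(τ − τ^α·(τ + log(1+η))^(1−α)), then the limit of f
at +∞, namely τ^(−α)·(1 + βτ − α)/(β(1−α)), is strictly smaller than
f(1) = (τ + log(1+η))^(1−α)/(1−α). -/
theorem stmt_11 (α τ η β : ℝ) (hα0 : 0 ≤ α) (hα1 : α ≠ 1)
    (hτ : 0 < τ) (hη : 0 < η) (hβ : 0 < β)
    (hβ' : β > (α - 1) / (τ - τ ^ α * (τ + Real.log (1 + η)) ^ (1 - α))) :
    τ ^ (-α) * (1 + β * τ - α) / (β * (1 - α))
      < (τ + Real.log (1 + η)) ^ (1 - α) / (1 - α) := by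
  set L := Real.log (1 + η) with hL
  have hLpos : 0 < L := Real.log_pos (by linarith)
  have hs : τ < τ + L := by linarith
  have hA : (0:ℝ) < τ ^ α := Real.rpow_pos_of_pos hτ α
  have hB : (0:ℝ) < (τ + L) ^ (1 - α) := Real.rpow_pos_of_pos (by linarith) _
  have hneg : τ ^ (-α) = (τ ^ α)⁻¹ := Real.rpow_neg hτ.le α
  have hprod : τ ^ α * τ ^ (1 - α) = τ := by
    rw [← Real.rpow_add hτ]; simp
  have hαne : α - 1 ≠ 0 := sub_ne_zero.mpr hα1
  have h1ne : (1:ℝ) - α ≠ 0 := fun h => hα1 (by linarith)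
  have heq : (τ + L) ^ (1 - α) / (1 - α) - τ ^ (-α) * (1 + β * τ - α) / (β * (1 - α))
      = (τ ^ (-α) * (1 + β * τ - α) - β * (τ + L) ^ (1 - α)) / (β * (α - 1)) := by
    field_simp [h1ne, hαne]
    ring
  rcases lt_or_gt_of_ne hα1 with h1 | h1
  · -- α < 1
    have hlt : τ ^ (1 - α) < (τ + L) ^ (1 - α) :=
      Real.rpow_lt_rpow hτ.le hs (by linarith)
    have hD : τ - τ ^ α * (τ + L) ^ (1 - α) < 0 := by nlinarith
    have hkey : β * (τ - τ ^ α * (τ + L) ^ (1 - α)) < α - 1 := by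
      rw [gt_iff_lt, div_lt_iff_of_neg hD] at hβ'; linarith
    have key : τ ^ (-α) * (1 + β * τ - α) < β * (τ + L) ^ (1 - α) := by
      rw [hneg]
      have h2 : 1 + β * τ - α < β * (τ ^ α * (τ + L) ^ (1 - α)) := by nlinarith
      calc (τ ^ α)⁻¹ * (1 + β * τ - α)
          < (τ ^ α)⁻¹ * (β * (τ ^ α * (τ + L) ^ (1 - α))) :=
            mul_lt_mul_of_pos_left h2 (inv_pos.mpr hA)
        _ = β * (τ + L) ^ (1 - α) := by field_simp
    have hpos : (τ ^ (-α) * (1 + β * τ - α) - β * (τ + L) ^ (1 - α)) / (β * (α - 1)) > 0 := by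
      apply div_pos_of_neg_of_neg (by linarith)
      exact mul_neg_of_pos_of_neg hβ (by linarith)
    linarith [heq, hpos]
  · -- α > 1
    have hlt : (τ + L) ^ (1 - α) < τ ^ (1 - α) :=
      Real.rpow_lt_rpow_of_neg hτ hs (by linarith)
    have hD : 0 < τ - τ ^ α * (τ + L) ^ (1 - α) := by nlinarith
    have hkey : α - 1 < β * (τ - τ ^ α * (τ + L) ^ (1 - α)) := by
      rw [gt_iff_lt, div_lt_iff₀ hD] at hβ'; linarith
    have key : β * (τ + L) ^ (1 - α) < τ ^ (-α) * (1 + β * τ - α) := by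
      rw [hneg]
      have h2 : β * (τ ^ α * (τ + L) ^ (1 - α)) < 1 + β * τ - α := by nlinarith
      calc β * (τ + L) ^ (1 - α)
          = (τ ^ α)⁻¹ * (β * (τ ^ α * (τ + L) ^ (1 - α))) := by field_simp
        _ < (τ ^ α)⁻¹ * (1 + β * τ - α) :=
            mul_lt_mul_of_pos_left h2 (inv_pos.mpr hA)
    have hpos : (τ ^ (-α) * (1 + β * τ - α) - β * (τ + L) ^ (1 - α)) / (β * (α - 1)) > 0 :=
      div_pos (by linarith) (mul_pos hβ (by linarith))
    linarith [heq, hpos]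
end
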